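/- arXiv:2010.06378 — 6 statements merged into one kernel-verified Lean document; each statement's English description precedes it below -/
import Mathlib

section
/- Let G be a simple graph on a nonempty finite vertex type V with |V| = n which is k-regular, let μ : V → ℝ be the eigenvalues of its real adjacency matrix (counted with multiplicity), and let v₀ : V be an index with μ v₀ = k (such an index exists since G is k-regular). Then E(G) = E(Gᶜ) if and only if (n : ℝ) = 2*k + 1 - ∑_{v ∈ V, v ≠ v₀} (|1 + μ v| - |μ v|). -/
open Finset

/-- The adjacency matrix of a simple graph over `ℝ` is Hermitian. -/
lemma adjMatrix_isHermitian {V : Type*} [Fintype V] (G : SimpleGraph V) [DecidableRel G.Adj] :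
    (G.adjMatrix ℝ).IsHermitian := by
  rw [Matrix.IsHermitian, Matrix.conjTranspose_eq_transpose_of_trivial]
  exact G.isSymm_adjMatrix

/-- The eigenvalues (with multiplicity) of the real adjacency matrix of a simple graph. -/
noncomputable def adjEig {V : Type*} [Fintype V] [DecidableEq V] (G : SimpleGraph V) : V → ℝ := by
  classical
  exact (adjMatrix_isHermitian G).eigenvalues

/-- The energy of a graph : the sum of the absolute values of its adjacency eigenvalues. -/
noncomputable def energy {V : Type*} [Fintype V] [DecidableEq V] (G : SimpleGraph V) : ℝ :=
  ∑ i, |adjEig G i|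

/-- The characteristic polynomial of the real adjacency matrix of a simple graph. -/
noncomputable def charpolyOf {V : Type*} [Fintype V] [DecidableEq V] (G : SimpleGraph V) :
    Polynomial ℝ := by
  classical
  exact (G.adjMatrix ℝ).charpoly

section Helpers

open Finset Polynomial

lemma det_smul_one_sub_eig {V : Type*} [Fintype V] [DecidableEq V]
    {M : Matrix V V ℝ} (hM : M.IsHermitian) (x : ℝ) :
    (x • (1 : Matrix V V ℝ) - M).det = ∏ v, (x - hM.eigenvalues v) := by
  set U : Matrix V V ℝ := (hM.eigenvectorUnitary : Matrix V V ℝ) with hUdef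
  have hU1 : U * star U = 1 := Matrix.mem_unitaryGroup_iff.mp hM.eigenvectorUnitary.2
  have key : x • (1 : Matrix V V ℝ) - M =
      U * (x • 1 - Matrix.diagonal (RCLike.ofReal ∘ hM.eigenvalues)) * star U := by
    conv_lhs => rw [hM.spectral_theorem]
    rw [Matrix.mul_sub, Matrix.sub_mul]
    congr 1
    rw [Matrix.mul_smul, Matrix.mul_one, Matrix.smul_mul, hU1]
  have hdetU : U.det * (star U).det = 1 := by
    rw [← Matrix.det_mul, hU1, Matrix.det_one]
  rw [key, Matrix.det_mul, Matrix.det_mul]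
  have : (x • (1 : Matrix V V ℝ) - Matrix.diagonal (RCLike.ofReal ∘ hM.eigenvalues)).det
      = ∏ v, (x - hM.eigenvalues v) := by
    rw [Matrix.smul_one_eq_diagonal]
    rw [show ((Matrix.diagonal fun _ => x) - Matrix.diagonal (RCLike.ofReal ∘ hM.eigenvalues) : Matrix V V ℝ) = Matrix.diagonal (fun v => x - hM.eigenvalues v) from by rw [← Matrix.diagonal_sub]; rfl, Matrix.det_diagonal]
  rw [this]
  rw [mul_comm U.det _, mul_assoc, hdetU, mul_one]

lemma det_smul_one_add_eig {V : Type*} [Fintype V] [DecidableEq V]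
    {M : Matrix V V ℝ} (hM : M.IsHermitian) (x : ℝ) :
    (x • (1 : Matrix V V ℝ) + M).det = ∏ v, (x + hM.eigenvalues v) := by
  set U : Matrix V V ℝ := (hM.eigenvectorUnitary : Matrix V V ℝ) with hUdef
  have hU1 : U * star U = 1 := Matrix.mem_unitaryGroup_iff.mp hM.eigenvectorUnitary.2
  have key : x • (1 : Matrix V V ℝ) + M =
      U * (x • 1 + Matrix.diagonal (RCLike.ofReal ∘ hM.eigenvalues)) * star U := by
    conv_lhs => rw [hM.spectral_theorem]
    rw [Matrix.mul_add, Matrix.add_mul]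
    congr 1
    rw [Matrix.mul_smul, Matrix.mul_one, Matrix.smul_mul, hU1]
  have hdetU : U.det * (star U).det = 1 := by
    rw [← Matrix.det_mul, hU1, Matrix.det_one]
  rw [key, Matrix.det_mul, Matrix.det_mul]
  have : (x • (1 : Matrix V V ℝ) + Matrix.diagonal (RCLike.ofReal ∘ hM.eigenvalues)).det
      = ∏ v, (x + hM.eigenvalues v) := by
    rw [Matrix.smul_one_eq_diagonal]
    rw [show ((Matrix.diagonal fun _ => x) + Matrix.diagonal (RCLike.ofReal ∘ hM.eigenvalues) : Matrix V V ℝ) = Matrix.diagonal (fun v => x + hM.eigenvalues v) from by rw [Matrix.diagonal_add]; rfl, Matrix.det_diagonal]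
  rw [this]
  rw [mul_comm U.det _, mul_assoc, hdetU, mul_one]

lemma adjEig_eq {V : Type*} [Fintype V] [DecidableEq V] (G : SimpleGraph V)
    [inst : DecidableRel G.Adj] :
    adjEig G = (adjMatrix_isHermitian G).eigenvalues := by
  unfold adjEig
  congr!

lemma adjMatrix_compl {V : Type*} [Fintype V] [DecidableEq V] (G : SimpleGraph V)
    [DecidableRel G.Adj] :
    (Gᶜ.adjMatrix ℝ) = Matrix.of (fun _ _ => (1:ℝ)) - 1 - G.adjMatrix ℝ := by
  ext i j
  by_cases h : i = j
  · subst h; simp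
  · by_cases hadj : G.Adj i j <;>
      simp [SimpleGraph.compl_adj, h, hadj, Matrix.one_apply_ne h]

lemma det_adjEig_sub {V : Type*} [Fintype V] [DecidableEq V] (G : SimpleGraph V)
    [DecidableRel G.Adj] (x : ℝ) :
    (x • (1 : Matrix V V ℝ) - G.adjMatrix ℝ).det = ∏ v, (x - adjEig G v) := by
  rw [adjEig_eq G]; exact det_smul_one_sub_eig (adjMatrix_isHermitian G) x

lemma det_adjEig_add {V : Type*} [Fintype V] [DecidableEq V] (G : SimpleGraph V)
    [DecidableRel G.Adj] (x : ℝ) :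
    (x • (1 : Matrix V V ℝ) + G.adjMatrix ℝ).det = ∏ v, (x + adjEig G v) := by
  rw [adjEig_eq G]; exact det_smul_one_add_eig (adjMatrix_isHermitian G) x

end Helpers

/-- For a `k`-regular simple graph `G` on `n` vertices with adjacency
eigenvalues `μ = adjEig G` and `v₀` an index with eigenvalue `k`, one has
`E(G) = E(Gᶜ)` iff `n = 2k + 1 - ∑_{v ≠ v₀} (|1 + μ v| - |μ v|)`. -/
theorem energy_eq_energy_compl_iff {V : Type*} [Fintype V] [DecidableEq V] [Nonempty V]
    (G : SimpleGraph V) [DecidableRel G.Adj] (n k : ℕ)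
    (hn : Fintype.card V = n) (hreg : G.IsRegularOfDegree k)
    (v₀ : V) (hv₀ : adjEig G v₀ = (k : ℝ)) :
    energy G = energy Gᶜ ↔
      (n : ℝ) = 2 * (k : ℝ) + 1 -
        ∑ v ∈ Finset.univ.erase v₀, (|1 + adjEig G v| - |adjEig G v|) := by
  set μ : V → ℝ := adjEig G with hμ
  set d : V → ℝ := fun v => if v = v₀ then (n : ℝ) - 1 - k else -1 - μ v with hd
  -- Step 1: determinant identity for all good x
  have key : ∀ x : ℝ, (∀ v, x + 1 + μ v ≠ 0) →
      ∏ v, (x - adjEig Gᶜ v) = ∏ v, (x - d v) := by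
    intro x hx
    have hk0 : x + 1 + (k : ℝ) ≠ 0 := by rw [← hv₀]; exact hx v₀
    rw [← det_adjEig_sub Gᶜ x]
    set A : Matrix V V ℝ := (x + 1) • 1 + G.adjMatrix ℝ with hA
    have hdetA : A.det = ∏ v, (x + 1 + μ v) := by
      rw [hA, det_adjEig_add G (x+1)]
    have hAunit : IsUnit A.det := by
      rw [hdetA]
      exact isUnit_iff_ne_zero.mpr (Finset.prod_ne_zero_iff.mpr fun v _ => hx v)
    have hxM : x • (1 : Matrix V V ℝ) - Gᶜ.adjMatrix ℝ =
        A + Matrix.replicateCol Unit (fun _ => (-1 : ℝ)) * Matrix.replicateRow Unit (fun _ => (1 : ℝ)) := by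
      rw [adjMatrix_compl G]
      ext i j
      by_cases h : i = j <;>
        simp [hA, Matrix.mul_apply, Matrix.one_apply, h, Matrix.replicateCol, Matrix.replicateRow]
      ring_nf
    rw [hxM, Matrix.det_add_replicateCol_mul_replicateRow hAunit]
    -- compute the 1×1 determinant
    have hc : Matrix.mulVec A (fun _ => (-(x + 1 + (k:ℝ))⁻¹ : ℝ)) = (fun _ => (-1 : ℝ)) := by
      funext v
      have hM1 : (Matrix.mulVec (G.adjMatrix ℝ) (fun _ => (-(x + 1 + (k:ℝ))⁻¹ : ℝ))) v
          = (k : ℝ) * (-(x + 1 + (k:ℝ))⁻¹) := by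
        exact SimpleGraph.adjMatrix_mulVec_const_apply_of_regular hreg
      rw [hA, Matrix.add_mulVec, Matrix.smul_mulVec, Matrix.one_mulVec]
      simp only [Pi.add_apply, Pi.smul_apply, smul_eq_mul, hM1]
      field_simp
      ring
    have hAinv : Matrix.mulVec A⁻¹ (fun _ => (-1 : ℝ)) = fun _ => -(x + 1 + (k:ℝ))⁻¹ := by
      rw [← hc, Matrix.mulVec_mulVec, Matrix.nonsing_inv_mul _ hAunit, Matrix.one_mulVec]
    have hfactor : (1 + (Matrix.replicateRow Unit (fun _ => (1:ℝ)) : Matrix Unit V ℝ) * A⁻¹ * (Matrix.replicateCol Unit (fun _ => (-1:ℝ)) : Matrix V Unit ℝ)).det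
        = 1 - (n : ℝ) * (x + 1 + (k:ℝ))⁻¹ := by
      rw [Matrix.mul_assoc, ← Matrix.replicateCol_mulVec, hAinv, Matrix.det_unique]
      simp [Matrix.replicateRow_mul_replicateCol_apply, dotProduct, Finset.sum_const, hn]
      ring
    rw [hfactor, hdetA]
    -- now pure algebra with the products
    have hsplitL : ∏ v, (x + 1 + μ v)
        = (x + 1 + (k:ℝ)) * ∏ v ∈ Finset.univ.erase v₀, (x + 1 + μ v) := by
      rw [← Finset.mul_prod_erase _ _ (Finset.mem_univ v₀), hv₀]
    have hsplitR : ∏ v, (x - d v)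
        = (x - ((n:ℝ) - 1 - k)) * ∏ v ∈ Finset.univ.erase v₀, (x + 1 + μ v) := by
      rw [← Finset.mul_prod_erase _ _ (Finset.mem_univ v₀)]
      congr 1
      · simp [hd]
      · refine Finset.prod_congr rfl fun v hv => ?_
        simp only [Finset.mem_erase] at hv
        simp only [hd, if_neg hv.1]
        ring
    rw [hsplitL, hsplitR]
    field_simp
    ring
  -- Step 2: polynomial identity and multiset equality
  have hmult : Finset.univ.val.map (adjEig Gᶜ) = Finset.univ.val.map d := by
    have hpq : ((Finset.univ.val.map (adjEig Gᶜ)).map (fun a => Polynomial.X - Polynomial.C a)).prod =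
        ((Finset.univ.val.map d).map (fun a => Polynomial.X - Polynomial.C a)).prod := by
      apply Polynomial.eq_of_infinite_eval_eq
      have hbad : ({x : ℝ | ∀ v, x + 1 + μ v ≠ 0}).Infinite := by
        have hfin : (Set.range (fun v => (-1 : ℝ) - μ v)).Finite := Set.finite_range _
        apply Set.Infinite.mono _ hfin.infinite_compl
        intro x hx
        simp only [Set.mem_compl_iff, Set.mem_range, not_exists] at hx
        intro v hv
        exact hx v (by linarith)
      apply Set.Infinite.mono _ hbad
      intro x hx
      have := key x hx
      simp only [Set.mem_setOf_eq, Polynomial.eval_multiset_prod, Multiset.map_map,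
        Function.comp, Polynomial.eval_sub, Polynomial.eval_X, Polynomial.eval_C]
      calc (Finset.univ.val.map fun v => x - adjEig Gᶜ v).prod
          = ∏ v, (x - adjEig Gᶜ v) := (Finset.prod_eq_multiset_prod _ _).symm
        _ = ∏ v, (x - d v) := this
        _ = (Finset.univ.val.map fun v => x - d v).prod := Finset.prod_eq_multiset_prod _ _
    have := congrArg Polynomial.roots hpq
    rwa [Polynomial.roots_multiset_prod_X_sub_C, Polynomial.roots_multiset_prod_X_sub_C] at this
  -- Step 3: energies
  have hsumc : energy Gᶜ = ∑ v, |d v| := by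
    rw [energy]
    rw [Finset.sum_eq_multiset_sum, Finset.sum_eq_multiset_sum]
    rw [show (Finset.univ.val.map fun i => |adjEig Gᶜ i|)
        = (Finset.univ.val.map (adjEig Gᶜ)).map abs from by rw [Multiset.map_map]; rfl]
    rw [show (Finset.univ.val.map fun i => |d i|)
        = (Finset.univ.val.map d).map abs from by rw [Multiset.map_map]; rfl]
    rw [hmult]
  have hkn : (k : ℝ) + 1 ≤ (n : ℝ) := by
    have := hreg (Classical.arbitrary V)
    have h2 := SimpleGraph.degree_lt_card_verts (G := G) (Classical.arbitrary V)
    rw [this, hn] at h2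
    exact_mod_cast h2
  have hEc : energy Gᶜ = ((n:ℝ) - 1 - k) + ∑ v ∈ Finset.univ.erase v₀, |1 + μ v| := by
    rw [hsumc, ← Finset.add_sum_erase _ _ (Finset.mem_univ v₀)]
    congr 1
    · have hdv : d v₀ = (n:ℝ) - 1 - (k:ℝ) := by simp [hd]
      rw [hdv, abs_of_nonneg (by linarith)]
    · refine Finset.sum_congr rfl fun v hv => ?_
      simp only [Finset.mem_erase] at hv
      simp only [hd, if_neg hv.1]
      rw [show (-1 : ℝ) - μ v = -(1 + μ v) by ring, abs_neg]
  have hEg : energy G = (k : ℝ) + ∑ v ∈ Finset.univ.erase v₀, |μ v| := by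
    rw [energy, ← Finset.add_sum_erase _ _ (Finset.mem_univ v₀), ← hμ, hv₀,
      abs_of_nonneg (by positivity)]
  rw [hEg, hEc, Finset.sum_sub_distrib]
  constructor <;> intro h <;> linarith
end

section
/- For every t ≥ 2 there exist a simple graph G on Fin (2*t) and k : ℕ such that G is k-regular, E(G) = E(Gᶜ), and G and Gᶜ are not isospectral. -/
open Finset

attribute [local instance] Classical.propDecidable

open Matrix

/-! ### Generic spectral lemmas -/

section spectral
variable {n : Type*} [Fintype n] [DecidableEq n]

lemma eigenvalues_congr' {A B : Matrix n n ℝ} (h : A = B) (hA : A.IsHermitian)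
    (hB : B.IsHermitian) : hA.eigenvalues = hB.eigenvalues := by subst h; rfl

lemma pow_conj (U D : Matrix n n ℝ) (hU : star U * U = 1) (k : ℕ) (hk : 1 ≤ k) :
    (U * D * star U) ^ k = U * D ^ k * star U := by
  have hU' : ∀ X : Matrix n n ℝ, star U * (U * X) = X := by
    intro X; rw [← Matrix.mul_assoc, hU, Matrix.one_mul]
  induction k, hk using Nat.le_induction with
  | base => simp
  | succ k hk ih =>
    rw [pow_succ, ih, pow_succ]
    simp only [Matrix.mul_assoc, hU']

lemma trace_pow_eq (A : Matrix n n ℝ) (hA : A.IsHermitian) (k : ℕ) (hk : 1 ≤ k) :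
    (A ^ k).trace = ∑ i, hA.eigenvalues i ^ k := by
  have hU : (star (hA.eigenvectorUnitary : Matrix n n ℝ)) *
      (hA.eigenvectorUnitary : Matrix n n ℝ) = 1 := by
    simpa using (Matrix.mem_unitaryGroup_iff'.mp (hA.eigenvectorUnitary).2)
  have hsp : A ^ k = (hA.eigenvectorUnitary : Matrix n n ℝ) *
      (diagonal (RCLike.ofReal ∘ hA.eigenvalues)) ^ k *
      (star (hA.eigenvectorUnitary : Matrix n n ℝ)) := by
    conv_lhs => rw [hA.spectral_theorem]
    exact pow_conj _ _ hU k hk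
  rw [hsp, Matrix.trace_mul_cycle, hU, Matrix.one_mul,
    Matrix.diagonal_pow, Matrix.trace_diagonal]
  simp [RCLike.ofReal_real_eq_id]

lemma eig_linfactor (A : Matrix n n ℝ) (hA : A.IsHermitian) (i : n) (r : ℝ)
    (w : n → ℝ) (c : ℝ) (hw : w = c • ⇑(hA.eigenvectorBasis i)) :
    (A - r • 1) *ᵥ w = ((hA.eigenvalues i - r) * c) • ⇑(hA.eigenvectorBasis i) := by
  subst hw
  rw [Matrix.sub_mulVec, Matrix.mulVec_smul, hA.mulVec_eigenvectorBasis]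
  rw [Matrix.smul_mulVec, Matrix.one_mulVec]
  ext j
  simp [smul_smul]
  ring

lemma eigenvectorBasis_fun_ne_zero (A : Matrix n n ℝ) (hA : A.IsHermitian) (i : n) :
    ⇑(hA.eigenvectorBasis i) ≠ 0 := by
  intro h
  have h0 : hA.eigenvectorBasis i = 0 := by
    ext j; exact congrFun h j
  exact hA.eigenvectorBasis.toBasis.ne_zero i (by simpa using h0)

/-- If a quartic in linear factors annihilates `A`, each eigenvalue is a root. -/
lemma eig_quartic_root (A : Matrix n n ℝ) (hA : A.IsHermitian) (a b c d : ℝ)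
    (h : (A - a • 1) * ((A - b • 1) * ((A - c • 1) * (A - d • 1))) = 0) (i : n) :
    (hA.eigenvalues i - a) * ((hA.eigenvalues i - b) *
      ((hA.eigenvalues i - c) * (hA.eigenvalues i - d))) = 0 := by
  set lam := hA.eigenvalues i with hlam
  set v := ⇑(hA.eigenvectorBasis i) with hv
  have h1 : (A - d • 1) *ᵥ v = ((lam - d) * 1) • v :=
    eig_linfactor A hA i d v 1 (one_smul ℝ v).symm
  have h2 := eig_linfactor A hA i c _ _ h1
  have h3 := eig_linfactor A hA i b _ _ h2
  have h4 := eig_linfactor A hA i a _ _ h3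
  have h5 : (A - a • 1) *ᵥ ((A - b • 1) *ᵥ ((A - c • 1) *ᵥ ((A - d • 1) *ᵥ v))) = 0 := by
    simp only [Matrix.mulVec_mulVec]
    rw [h, Matrix.zero_mulVec]
  rw [h5] at h4
  have h6 := (smul_eq_zero.mp h4.symm).resolve_right (eigenvectorBasis_fun_ne_zero A hA i)
  calc (lam - a) * ((lam - b) * ((lam - c) * (lam - d)))
      = (lam - a) * ((lam - b) * ((lam - c) * ((lam - d) * 1))) := by ring
    _ = 0 := h6

end spectral

/-! ### The block matrices for the crown graph and its complement (the prism) -/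

noncomputable def Jm (t : ℕ) : Matrix (Fin t) (Fin t) ℝ := Matrix.of fun _ _ => 1
noncomputable def Bm (t : ℕ) : Matrix (Fin t) (Fin t) ℝ := Jm t - 1
noncomputable def Btm (t : ℕ) : Matrix (Fin t ⊕ Fin t) (Fin t ⊕ Fin t) ℝ :=
  fromBlocks (Bm t) 0 0 (Bm t)
noncomputable def Sm (t : ℕ) : Matrix (Fin t ⊕ Fin t) (Fin t ⊕ Fin t) ℝ := fromBlocks 0 1 1 0
noncomputable def Mc (t : ℕ) : Matrix (Fin t ⊕ Fin t) (Fin t ⊕ Fin t) ℝ :=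
  fromBlocks 0 (Bm t) (Bm t) 0
noncomputable def Mp (t : ℕ) : Matrix (Fin t ⊕ Fin t) (Fin t ⊕ Fin t) ℝ :=
  fromBlocks (Bm t) 1 1 (Bm t)

section blocks
variable (t : ℕ)

lemma hJ : Jm t * Jm t = (t : ℝ) • Jm t := by
  ext i j
  simp [Jm, Matrix.mul_apply]

lemma hB2 : Bm t * Bm t = ((t:ℝ) - 2) • Bm t + ((t:ℝ) - 1) • 1 := by
  unfold Bm
  simp only [sub_mul, mul_sub, one_mul, mul_one, hJ]
  module

lemma hBt2 : Btm t * Btm t = ((t:ℝ) - 2) • Btm t + ((t:ℝ) - 1) • 1 := by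
  unfold Btm
  rw [← Matrix.fromBlocks_one (l := Fin t) (m := Fin t)]
  simp only [Matrix.fromBlocks_multiply, Matrix.fromBlocks_smul, Matrix.fromBlocks_add,
    Matrix.mul_zero, Matrix.zero_mul, add_zero, zero_add, Matrix.mul_one, Matrix.one_mul,
    smul_zero]
  rw [hB2]

lemma hS2 : Sm t * Sm t = 1 := by
  unfold Sm
  rw [← Matrix.fromBlocks_one (l := Fin t) (m := Fin t)]
  simp [Matrix.fromBlocks_multiply]

lemma hBtS : Btm t * Sm t = Mc t := by
  unfold Btm Sm Mc
  simp [Matrix.fromBlocks_multiply]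

lemma hSBt : Sm t * Btm t = Mc t := by
  unfold Btm Sm Mc
  simp [Matrix.fromBlocks_multiply]

lemma hMp : Mp t = Btm t + Sm t := by
  unfold Mp Btm Sm
  simp [Matrix.fromBlocks_add]

lemma hSB2 : Sm t * Btm t = Btm t * Sm t := by rw [hSBt, hBtS]

lemma quartic_crown :
    (Mc t - (1:ℝ) • 1) * ((Mc t - (-1:ℝ) • 1) *
      ((Mc t - ((t:ℝ)-1) • 1) * (Mc t - (1-(t:ℝ)) • 1))) = 0 := by
  have hBB : ∀ X : Matrix (Fin t ⊕ Fin t) (Fin t ⊕ Fin t) ℝ,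
      Btm t * (Btm t * X) = ((t:ℝ)-2) • (Btm t * X) + ((t:ℝ)-1) • X := by
    intro X; rw [← Matrix.mul_assoc, hBt2, Matrix.add_mul, Matrix.smul_mul, Matrix.smul_mul,
      Matrix.one_mul]
  have hSS : ∀ X : Matrix (Fin t ⊕ Fin t) (Fin t ⊕ Fin t) ℝ, Sm t * (Sm t * X) = X := by
    intro X; rw [← Matrix.mul_assoc, hS2, Matrix.one_mul]
  have hSB : ∀ X : Matrix (Fin t ⊕ Fin t) (Fin t ⊕ Fin t) ℝ,
      Sm t * (Btm t * X) = Btm t * (Sm t * X) := by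
    intro X; rw [← Matrix.mul_assoc, hSB2, Matrix.mul_assoc]
  rw [← hBtS]
  simp only [sub_mul, mul_sub, add_mul, mul_add, smul_mul_assoc, mul_smul_comm, mul_one,
    one_mul, mul_assoc, hSS, hSB, hBB, hS2, hSB2, hBt2, smul_smul, smul_add]
  match_scalars <;> ring

lemma quartic_prism :
    (Mp t - (t:ℝ) • 1) * ((Mp t - ((t:ℝ)-2) • 1) *
      ((Mp t - (0:ℝ) • 1) * (Mp t - (-2:ℝ) • 1))) = 0 := by
  have hBB : ∀ X : Matrix (Fin t ⊕ Fin t) (Fin t ⊕ Fin t) ℝ,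
      Btm t * (Btm t * X) = ((t:ℝ)-2) • (Btm t * X) + ((t:ℝ)-1) • X := by
    intro X; rw [← Matrix.mul_assoc, hBt2, Matrix.add_mul, Matrix.smul_mul, Matrix.smul_mul,
      Matrix.one_mul]
  have hSS : ∀ X : Matrix (Fin t ⊕ Fin t) (Fin t ⊕ Fin t) ℝ, Sm t * (Sm t * X) = X := by
    intro X; rw [← Matrix.mul_assoc, hS2, Matrix.one_mul]
  have hSB : ∀ X : Matrix (Fin t ⊕ Fin t) (Fin t ⊕ Fin t) ℝ,
      Sm t * (Btm t * X) = Btm t * (Sm t * X) := by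
    intro X; rw [← Matrix.mul_assoc, hSB2, Matrix.mul_assoc]
  rw [hMp]
  simp only [sub_mul, mul_sub, add_mul, mul_add, smul_mul_assoc, mul_smul_comm, mul_one,
    one_mul, mul_assoc, hSS, hSB, hBB, hS2, hSB2, hBt2, smul_smul, smul_add]
  match_scalars <;> ring

lemma trace_fromBlocks' {m : Type*} [Fintype m] (A B C D : Matrix m m ℝ) :
    (fromBlocks A B C D).trace = A.trace + D.trace := by
  simp [Matrix.trace, Fintype.sum_sum_type, Matrix.diag]

lemma trace_Jm : (Jm t).trace = (t : ℝ) := by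
  simp [Matrix.trace, Jm, Matrix.diag]

lemma trace_Bm : (Bm t).trace = 0 := by
  simp [Bm, trace_Jm]

lemma trace_Btm : (Btm t).trace = 0 := by
  simp [Btm, trace_fromBlocks', trace_Bm]

lemma trace_Sm : (Sm t).trace = 0 := by
  simp [Sm, trace_fromBlocks']

lemma trace_Mc : (Mc t).trace = 0 := by
  simp [Mc, trace_fromBlocks']

lemma trace_Mp : (Mp t).trace = 0 := by
  simp [Mp, trace_fromBlocks', trace_Bm]

lemma trace_one' : (1 : Matrix (Fin t ⊕ Fin t) (Fin t ⊕ Fin t) ℝ).trace = 2 * t := by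
  rw [Matrix.trace_one]
  simp; ring

lemma trace_Mc_sq : (Mc t * Mc t).trace = 2 * t * (t - 1) := by
  have h : Mc t * Mc t = ((t:ℝ)-2) • Btm t + ((t:ℝ)-1) • 1 := by
    rw [← hBtS, Matrix.mul_assoc, ← Matrix.mul_assoc (Sm t), hSB2, Matrix.mul_assoc,
      hS2, Matrix.mul_one, hBt2]
  rw [h]
  simp [Matrix.trace_add, Matrix.trace_smul, trace_Btm, trace_one']
  ring

lemma trace_Mp_sq : (Mp t * Mp t).trace = 2 * t * t := by
  have h : Mp t * Mp t = ((t:ℝ)-2) • Btm t + (t:ℝ) • 1 + (2:ℝ) • Mc t := by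
    rw [hMp]
    simp only [add_mul, mul_add, hBt2, hS2, hSBt, hBtS]
    match_scalars <;> ring
  rw [h]
  simp [Matrix.trace_add, Matrix.trace_smul, trace_Btm, trace_one', trace_Mc]
  ring

lemma trace_Mp_cube : (Mp t * (Mp t * Mp t)).trace = 2 * t * (t - 1) * (t - 2) := by
  have hBB : ∀ X : Matrix (Fin t ⊕ Fin t) (Fin t ⊕ Fin t) ℝ,
      Btm t * (Btm t * X) = ((t:ℝ)-2) • (Btm t * X) + ((t:ℝ)-1) • X := by
    intro X; rw [← Matrix.mul_assoc, hBt2, Matrix.add_mul, Matrix.smul_mul, Matrix.smul_mul,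
      Matrix.one_mul]
  have hSS : ∀ X : Matrix (Fin t ⊕ Fin t) (Fin t ⊕ Fin t) ℝ, Sm t * (Sm t * X) = X := by
    intro X; rw [← Matrix.mul_assoc, hS2, Matrix.one_mul]
  have hSB : ∀ X : Matrix (Fin t ⊕ Fin t) (Fin t ⊕ Fin t) ℝ,
      Sm t * (Btm t * X) = Btm t * (Sm t * X) := by
    intro X; rw [← Matrix.mul_assoc, hSB2, Matrix.mul_assoc]
  have h : Mp t * (Mp t * Mp t) = ((t:ℝ)^2 - 3*t + 6) • Btm t + (((t:ℝ)-2)*((t:ℝ)-1)) • 1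
      + (3*((t:ℝ)-2)) • Mc t + (3*(t:ℝ)-2) • Sm t := by
    rw [hMp, ← hBtS]
    simp only [sub_mul, mul_sub, add_mul, mul_add, smul_mul_assoc, mul_smul_comm, mul_one,
      one_mul, mul_assoc, hSS, hSB, hBB, hS2, hSB2, hBt2, smul_smul, smul_add]
    match_scalars <;> ring
  rw [h]
  simp [Matrix.trace_add, Matrix.trace_smul, trace_Btm, trace_one', trace_Mc, trace_Sm]
  ring

end blocks

/-! ### Determinants -/

section dets
variable (t : ℕ)

lemma det_Mc_ne_zero (ht : 2 ≤ t) : (Mc t).det ≠ 0 := by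
  have ht1 : ((t : ℝ) - 1) ≠ 0 := by
    have : (2:ℝ) ≤ (t:ℝ) := by exact_mod_cast ht
    intro h; nlinarith
  set C : Matrix (Fin t) (Fin t) ℝ := Jm t - ((t:ℝ)-1) • 1 with hC
  have hBC : Bm t * C = ((t:ℝ)-1) • 1 := by
    rw [hC]
    unfold Bm
    simp only [sub_mul, mul_sub, one_mul, mul_one, mul_smul_comm, hJ]
    match_scalars <;> ring
  have hprod : Mc t * fromBlocks 0 C C 0 = ((t:ℝ)-1) • 1 := by
    unfold Mc
    rw [← Matrix.fromBlocks_one (l := Fin t) (m := Fin t)]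
    simp only [Matrix.fromBlocks_multiply, Matrix.mul_zero, Matrix.zero_mul, add_zero, zero_add,
      Matrix.fromBlocks_smul, hBC, smul_zero]
  have hdet : (Mc t).det * (fromBlocks 0 C C 0).det
      = (((t:ℝ)-1) • (1 : Matrix (Fin t ⊕ Fin t) (Fin t ⊕ Fin t) ℝ)).det := by
    rw [← Matrix.det_mul, hprod]
  rw [Matrix.det_smul, Matrix.det_one, mul_one] at hdet
  intro h0
  rw [h0, zero_mul] at hdet
  exact pow_ne_zero _ ht1 hdet.symm

lemma det_Mp_eq_zero (ht : 2 ≤ t) : (Mp t).det = 0 := by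
  have h01 : (⟨0, by omega⟩ : Fin t) ≠ ⟨1, by omega⟩ := by
    intro h; simpa using h
  set w : Fin t → ℝ := Pi.single (⟨0, by omega⟩ : Fin t) 1 - Pi.single (⟨1, by omega⟩ : Fin t) 1
    with hw
  have hJw : Jm t *ᵥ w = 0 := by
    ext i
    simp [hw, Jm, Matrix.mulVec, dotProduct, mul_sub, Finset.sum_sub_distrib,
      Pi.single_apply]
  have hBw : Bm t *ᵥ w + w = 0 := by
    unfold Bm
    rw [Matrix.sub_mulVec, Matrix.one_mulVec, hJw]
    ext i; simp
  have hker : Mp t *ᵥ (Sum.elim w w) = 0 := by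
    unfold Mp
    rw [Matrix.fromBlocks_mulVec]
    ext (i | i) <;>
      · have h' := congrFun hBw i
        simp only [Pi.add_apply, Pi.zero_apply] at h'
        simp only [Sum.elim_comp_inl, Sum.elim_comp_inr, Matrix.one_mulVec, Sum.elim_inl,
          Sum.elim_inr, Pi.add_apply, Pi.zero_apply]
        linarith
  have hne : Sum.elim w w ≠ 0 := by
    intro h
    have := congrFun h (Sum.inl ⟨0, by omega⟩)
    rw [Sum.elim_inl] at this
    rw [hw] at this
    simp [Pi.single_apply, h01] at this
  exact (Matrix.exists_mulVec_eq_zero_iff).mp ⟨Sum.elim w w, hne, hker⟩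

end dets

/-! ### The crown graph on `Fin (2*t)` -/

section graphs
variable (t : ℕ)

def crownRel : (Fin t ⊕ Fin t) → (Fin t ⊕ Fin t) → Prop :=
  fun a b => match a, b with
  | Sum.inl i, Sum.inr j => i ≠ j
  | Sum.inr i, Sum.inl j => i ≠ j
  | _, _ => False

def epsEquiv : (Fin t ⊕ Fin t) ≃ Fin (2 * t) :=
  finSumFinEquiv.trans (finCongr (two_mul t).symm)

def crownG : SimpleGraph (Fin (2 * t)) where
  Adj u v := crownRel t ((epsEquiv t).symm u) ((epsEquiv t).symm v)
  symm := by
    constructor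
    intro u v h
    set a := (epsEquiv t).symm u with ha
    set b := (epsEquiv t).symm v with hb
    clear_value a b
    rcases a with i | i <;> rcases b with j | j <;> simp_all [crownRel] <;>
      exact fun e => h e.symm
  loopless := by
    constructor
    intro u h
    set a := (epsEquiv t).symm u with ha
    clear_value a
    rcases a with i | i <;> simp_all [crownRel]

lemma adjMatrix_crown [DecidableRel (crownG t).Adj] :
    (crownG t).adjMatrix ℝ = (Matrix.reindex (epsEquiv t) (epsEquiv t)) (Mc t) := by
  ext u v
  obtain ⟨a, rfl⟩ := (epsEquiv t).surjective u
  obtain ⟨b, rfl⟩ := (epsEquiv t).surjective v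
  have hAdj : (crownG t).Adj ((epsEquiv t) a) ((epsEquiv t) b) ↔ crownRel t a b := by
    show crownRel t ((epsEquiv t).symm ((epsEquiv t) a)) ((epsEquiv t).symm ((epsEquiv t) b)) ↔ _
    rw [Equiv.symm_apply_apply, Equiv.symm_apply_apply]
  rw [Matrix.reindex_apply, Matrix.submatrix_apply, SimpleGraph.adjMatrix_apply,
    Equiv.symm_apply_apply, Equiv.symm_apply_apply, if_congr hAdj rfl rfl]
  rcases a with i | i <;> rcases b with j | j <;>
    simp [crownRel, Mc, Bm, Jm, Matrix.one_apply] <;> split_ifs <;> simp_all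

lemma adjMatrix_crown_compl [DecidableRel (crownG t)ᶜ.Adj] :
    ((crownG t)ᶜ).adjMatrix ℝ = (Matrix.reindex (epsEquiv t) (epsEquiv t)) (Mp t) := by
  ext u v
  obtain ⟨a, rfl⟩ := (epsEquiv t).surjective u
  obtain ⟨b, rfl⟩ := (epsEquiv t).surjective v
  have hAdj : ((crownG t)ᶜ).Adj ((epsEquiv t) a) ((epsEquiv t) b)
      ↔ (a ≠ b ∧ ¬ crownRel t a b) := by
    rw [SimpleGraph.compl_adj]
    have h1 : (epsEquiv t) a ≠ (epsEquiv t) b ↔ a ≠ b := by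
      constructor
      · exact fun h h' => h (h' ▸ rfl)
      · exact fun h h' => h ((epsEquiv t).injective h')
    have h2 : (crownG t).Adj ((epsEquiv t) a) ((epsEquiv t) b) ↔ crownRel t a b := by
      show crownRel t ((epsEquiv t).symm ((epsEquiv t) a))
        ((epsEquiv t).symm ((epsEquiv t) b)) ↔ _
      rw [Equiv.symm_apply_apply, Equiv.symm_apply_apply]
    rw [h1, h2]
  rw [Matrix.reindex_apply, Matrix.submatrix_apply, SimpleGraph.adjMatrix_apply,
    Equiv.symm_apply_apply, Equiv.symm_apply_apply, if_congr hAdj rfl rfl]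
  rcases a with i | i <;> rcases b with j | j <;>
    simp [crownRel, Mp, Bm, Jm, Matrix.one_apply] <;> split_ifs <;> simp_all

lemma crown_regular : (crownG t).IsRegularOfDegree (t - 1) := by
  intro v
  obtain ⟨a, rfl⟩ := (epsEquiv t).surjective v
  rw [SimpleGraph.degree, SimpleGraph.neighborFinset_eq_filter]
  have hAdj : ∀ b, (crownG t).Adj ((epsEquiv t) a) ((epsEquiv t) b) ↔ crownRel t a b := by
    intro b
    show crownRel t ((epsEquiv t).symm ((epsEquiv t) a))
      ((epsEquiv t).symm ((epsEquiv t) b)) ↔ _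
    rw [Equiv.symm_apply_apply, Equiv.symm_apply_apply]
  have hcard : (univ.filter ((crownG t).Adj ((epsEquiv t) a))).card
      = (univ.filter (crownRel t a)).card := by
    apply Finset.card_bij (fun w _ => (epsEquiv t).symm w)
    · intro w hw
      simp only [Finset.mem_filter, Finset.mem_univ, true_and] at hw ⊢
      obtain ⟨b, rfl⟩ := (epsEquiv t).surjective w
      rw [Equiv.symm_apply_apply]
      exact (hAdj b).mp hw
    · intro w1 _ w2 _ h
      exact (epsEquiv t).symm.injective h
    · intro b hb
      simp only [Finset.mem_filter, Finset.mem_univ, true_and] at hb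
      exact ⟨(epsEquiv t) b, by
        simp only [Finset.mem_filter, Finset.mem_univ, true_and]
        exact (hAdj b).mpr hb, by simp⟩
  rw [hcard]
  rcases a with i | i
  · have : univ.filter (crownRel t (Sum.inl i))
        = (univ.filter (fun j : Fin t => i ≠ j)).map ⟨Sum.inr, Sum.inr_injective⟩ := by
      ext b
      rcases b with j | j <;> simp [crownRel]
    rw [this, Finset.card_map]
    rw [Finset.filter_ne, Finset.card_erase_of_mem (Finset.mem_univ i), Finset.card_univ,
      Fintype.card_fin]
  · have : univ.filter (crownRel t (Sum.inr i))
        = (univ.filter (fun j : Fin t => i ≠ j)).map ⟨Sum.inl, Sum.inl_injective⟩ := by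
      ext b
      rcases b with j | j <;> simp [crownRel]
    rw [this, Finset.card_map]
    rw [Finset.filter_ne, Finset.card_erase_of_mem (Finset.mem_univ i), Finset.card_univ,
      Fintype.card_fin]

lemma trace_reindex' (X : Matrix (Fin t ⊕ Fin t) (Fin t ⊕ Fin t) ℝ) :
    ((Matrix.reindex (epsEquiv t) (epsEquiv t)) X).trace = X.trace := by
  simp only [Matrix.trace, Matrix.diag, Matrix.reindex_apply, Matrix.submatrix_apply]
  exact Fintype.sum_equiv (epsEquiv t).symm _ _ (fun _ => rfl)

end graphs

/-! ### Energy computations -/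

section energy
variable (t : ℕ)

lemma cast_two_le (ht : 2 ≤ t) : (2:ℝ) ≤ (t:ℝ) := by exact_mod_cast ht

lemma energy_crown_eigen (ht : 2 ≤ t)
    (hA : ((Matrix.reindex (epsEquiv t) (epsEquiv t)) (Mc t)).IsHermitian) :
    ∑ i, |hA.eigenvalues i| = 4 * ((t:ℝ) - 1) := by
  set τ : ℝ := (t : ℝ) with hτdef
  have hτ : (2:ℝ) ≤ τ := cast_two_le t ht
  set φ := Matrix.reindexAlgEquiv ℝ ℝ (epsEquiv t) with hφ
  set A := (Matrix.reindex (epsEquiv t) (epsEquiv t)) (Mc t) with hAdef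
  have hAφ : A = φ (Mc t) := by rw [hφ, Matrix.reindexAlgEquiv_apply]
  -- quartic identity transferred
  have hq : (A - (1:ℝ) • 1) * ((A - (-1:ℝ) • 1) * ((A - (τ-1) • 1) * (A - (1-τ) • 1))) = 0 := by
    have h0 := congrArg φ (quartic_crown t)
    rw [_root_.map_mul, _root_.map_mul, _root_.map_mul, map_sub, map_sub, map_sub, map_sub, _root_.map_smul, _root_.map_smul,
      _root_.map_smul, _root_.map_smul, _root_.map_one, _root_.map_zero] at h0
    rw [hAφ]
    exact h0
  -- eigenvalue roots
  have hroot := eig_quartic_root A hA 1 (-1) (τ-1) (1-τ) hq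
  -- sum of squares
  have hsq : ∑ i, hA.eigenvalues i ^ 2 = 2 * τ * (τ - 1) := by
    rw [← trace_pow_eq A hA 2 (by norm_num), pow_two, hAφ, ← _root_.map_mul,
      hφ, Matrix.reindexAlgEquiv_apply, trace_reindex', trace_Mc_sq]
  -- absolute values
  have habs : ∀ i, |hA.eigenvalues i| = (hA.eigenvalues i ^ 2 + (τ - 1)) / τ := by
    intro i
    have h := hroot i
    set lam := hA.eigenvalues i
    have hτ0 : τ ≠ 0 := by linarith
    rcases mul_eq_zero.mp h with h1 | h'
    · have : lam = 1 := by linarith [sub_eq_zero.mp h1]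
      rw [this]; rw [abs_one]; field_simp; ring
    rcases mul_eq_zero.mp h' with h1 | h'
    · have : lam = -1 := by
        have := sub_eq_zero.mp h1; linarith
      rw [this]
      rw [abs_neg, abs_one]; field_simp; ring
    rcases mul_eq_zero.mp h' with h1 | h1
    · have hl : lam = τ - 1 := sub_eq_zero.mp h1
      rw [hl, abs_of_nonneg (by linarith)]
      field_simp; ring
    · have hl : lam = 1 - τ := by
        have := sub_eq_zero.mp h1; linarith
      rw [hl, abs_of_nonpos (by linarith)]
      field_simp; ring
  rw [Finset.sum_congr rfl (fun i _ => habs i), ← Finset.sum_div, Finset.sum_add_distrib,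
    Finset.sum_const, Finset.card_univ, Fintype.card_fin, hsq]
  have hτ0 : τ ≠ 0 := by linarith
  have : ((2 * t : ℕ) : ℝ) = 2 * τ := by push_cast [hτdef]; ring
  rw [nsmul_eq_mul, this]
  field_simp
  ring

lemma energy_prism_eigen (ht : 2 ≤ t)
    (hA : ((Matrix.reindex (epsEquiv t) (epsEquiv t)) (Mp t)).IsHermitian) :
    ∑ i, |hA.eigenvalues i| = 4 * ((t:ℝ) - 1) := by
  set τ : ℝ := (t : ℝ) with hτdef
  have hτ : (2:ℝ) ≤ τ := cast_two_le t ht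
  have hτ0 : τ ≠ 0 := by linarith
  have hτ2 : τ + 2 ≠ 0 := by linarith
  set φ := Matrix.reindexAlgEquiv ℝ ℝ (epsEquiv t) with hφ
  set A := (Matrix.reindex (epsEquiv t) (epsEquiv t)) (Mp t) with hAdef
  have hAφ : A = φ (Mp t) := by rw [hφ, Matrix.reindexAlgEquiv_apply]
  have hq : (A - τ • 1) * ((A - (τ-2) • 1) * ((A - (0:ℝ) • 1) * (A - (-2:ℝ) • 1))) = 0 := by
    have h0 := congrArg φ (quartic_prism t)
    rw [_root_.map_mul, _root_.map_mul, _root_.map_mul, map_sub, map_sub, map_sub, map_sub, _root_.map_smul, _root_.map_smul,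
      _root_.map_smul, _root_.map_smul, _root_.map_one, _root_.map_zero] at h0
    rw [hAφ]
    exact h0
  have hroot := eig_quartic_root A hA τ (τ-2) 0 (-2) hq
  have htr1 : ∑ i, hA.eigenvalues i = 0 := by
    have := trace_pow_eq A hA 1 (le_refl 1)
    simp only [pow_one] at this
    rw [← this, hAφ, hφ, Matrix.reindexAlgEquiv_apply, trace_reindex', trace_Mp]
  have htr2 : ∑ i, hA.eigenvalues i ^ 2 = 2 * τ * τ := by
    rw [← trace_pow_eq A hA 2 (by norm_num), pow_two, hAφ, ← _root_.map_mul,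
      hφ, Matrix.reindexAlgEquiv_apply, trace_reindex', trace_Mp_sq]
  have htr3 : ∑ i, hA.eigenvalues i ^ 3 = 2 * τ * (τ - 1) * (τ - 2) := by
    have h3 : A ^ 3 = A * (A * A) := by
      rw [pow_succ, pow_two, Matrix.mul_assoc]
    rw [← trace_pow_eq A hA 3 (by norm_num), h3, hAφ, ← _root_.map_mul, ← _root_.map_mul,
      hφ, Matrix.reindexAlgEquiv_apply, trace_reindex', trace_Mp_cube]
  have habs : ∀ i, |hA.eigenvalues i| = hA.eigenvalues i
      - (2 / (τ * (τ + 2))) * (hA.eigenvalues i ^ 3 - (2*τ-2) * hA.eigenvalues i ^ 2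
        + τ*(τ-2) * hA.eigenvalues i) := by
    intro i
    have h := hroot i
    set lam := hA.eigenvalues i
    rcases mul_eq_zero.mp h with h1 | h'
    · have hl : lam = τ := sub_eq_zero.mp h1
      rw [hl, abs_of_nonneg (by linarith)]
      field_simp; ring
    rcases mul_eq_zero.mp h' with h1 | h'
    · have hl : lam = τ - 2 := sub_eq_zero.mp h1
      rw [hl, abs_of_nonneg (by linarith)]
      field_simp; ring
    rcases mul_eq_zero.mp h' with h1 | h1
    · have hl : lam = 0 := by
        have := sub_eq_zero.mp h1; simpa using this
      rw [hl]
      simp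
    · have hl : lam = -2 := by
        have := sub_eq_zero.mp h1; linarith
      rw [hl, abs_of_nonpos (by norm_num)]
      field_simp; ring
  rw [Finset.sum_congr rfl (fun i _ => habs i), Finset.sum_sub_distrib, ← Finset.mul_sum]
  have hinner : ∑ i, (hA.eigenvalues i ^ 3 - (2*τ-2) * hA.eigenvalues i ^ 2
      + τ*(τ-2) * hA.eigenvalues i)
      = (2 * τ * (τ - 1) * (τ - 2)) - (2*τ-2) * (2 * τ * τ) + τ*(τ-2) * 0 := by
    rw [Finset.sum_add_distrib, Finset.sum_sub_distrib, ← Finset.mul_sum, ← Finset.mul_sum,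
      htr1, htr2, htr3]
  rw [hinner, htr1]
  field_simp
  ring

end energy

/-! ### Instance-robust unfolding of `energy` and `charpolyOf` -/

lemma energy_eq_sum {V : Type*} [Fintype V] [DecidableEq V] (G : SimpleGraph V)
    {B : Matrix V V ℝ} (hB : B.IsHermitian)
    (h : ∀ (inst : DecidableRel G.Adj), @SimpleGraph.adjMatrix ℝ V G inst _ _ = B) :
    energy G = ∑ i, |hB.eigenvalues i| := by
  unfold energy adjEig
  rw [eigenvalues_congr' (h _) _ hB]

lemma charpolyOf_eq {V : Type*} [Fintype V] [DecidableEq V] (G : SimpleGraph V)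
    {B : Matrix V V ℝ}
    (h : ∀ (inst : DecidableRel G.Adj), @SimpleGraph.adjMatrix ℝ V G inst _ _ = B) :
    charpolyOf G = B.charpoly := by
  unfold charpolyOf
  rw [h _]

/-- For every `t ≥ 2` there is a regular graph on `2t` vertices which is
equienergetic and non-isospectral with its complement. -/
theorem exists_regular_equienergetic_non_isospectral (t : ℕ) (ht : 2 ≤ t) :
    ∃ (G : SimpleGraph (Fin (2 * t))) (k : ℕ),
      G.IsRegularOfDegree k ∧ energy G = energy Gᶜ ∧ charpolyOf G ≠ charpolyOf Gᶜ := by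
  refine ⟨crownG t, t - 1, crown_regular t, ?_, ?_⟩
  · -- energy equality
    have hHc : ((Matrix.reindex (epsEquiv t) (epsEquiv t)) (Mc t)).IsHermitian :=
      adjMatrix_crown t ▸ adjMatrix_isHermitian (crownG t)
    have hHp : ((Matrix.reindex (epsEquiv t) (epsEquiv t)) (Mp t)).IsHermitian :=
      adjMatrix_crown_compl t ▸ adjMatrix_isHermitian ((crownG t)ᶜ)
    rw [energy_eq_sum (crownG t) hHc (fun _ => adjMatrix_crown t),
      energy_eq_sum ((crownG t)ᶜ) hHp (fun _ => adjMatrix_crown_compl t),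
      energy_crown_eigen t ht hHc, energy_prism_eigen t ht hHp]
  · -- distinct characteristic polynomials
    intro hchar
    rw [charpolyOf_eq (crownG t) (fun _ => adjMatrix_crown t),
      charpolyOf_eq ((crownG t)ᶜ) (fun _ => adjMatrix_crown_compl t)] at hchar
    have hdet : ((Matrix.reindex (epsEquiv t) (epsEquiv t)) (Mc t)).det
        = ((Matrix.reindex (epsEquiv t) (epsEquiv t)) (Mp t)).det := by
      rw [Matrix.det_eq_sign_charpoly_coeff, Matrix.det_eq_sign_charpoly_coeff, hchar]
    rw [Matrix.det_reindex_self, Matrix.det_reindex_self] at hdet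
    exact det_Mc_ne_zero t ht (hdet.trans (det_Mp_eq_zero t ht))
end

section
/- Let a m : ℕ with 2 ≤ a and 2 ≤ m, and let G be the complete multipartite graph on Fin a × Fin m, in which (i,x) is adjacent to (j,y) iff i ≠ j. Then E(G) = E(Gᶜ) if and only if a = m. Moreover, when a = m, E(G) = 2*m*(m-1). -/
open Finset

/-- The complete multipartite graph with `a` parts of size `m`: the graph on
`Fin a × Fin m` where `(i,x)` is adjacent to `(j,y)` iff `i ≠ j`. -/
def completeMultipartiteGraph' (a m : ℕ) : SimpleGraph (Fin a × Fin m) where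
  Adj x y := x.1 ≠ y.1
  symm := ⟨fun _ _ h => h.symm⟩
  loopless := ⟨fun _ h => h rfl⟩


section EnergyAux
open Matrix Polynomial

variable {n : Type*} [Fintype n] [DecidableEq n]

lemma charpoly_conj_aux (A P Q D : Matrix n n ℝ) (hPQ : P * Q = 1)
    (hAP : A * P = P * D) : A.charpoly = D.charpoly := by
  have hA : A = P * D * Q := by
    calc A = A * (P * Q) := by rw [hPQ, mul_one]
    _ = (A * P) * Q := by rw [mul_assoc]
    _ = P * D * Q := by rw [hAP]
  let F : Matrix n n ℝ →+* Matrix n n ℝ[X] := (C : ℝ →+* ℝ[X]).mapMatrix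
  have hPQ' : F P * F Q = 1 := by rw [← _root_.map_mul, hPQ, _root_.map_one]
  have hsc : F P * Matrix.scalar n (X : ℝ[X]) = Matrix.scalar n (X : ℝ[X]) * F P :=
    (Matrix.scalar_commute (X : ℝ[X]) (fun r => Commute.all _ _) (F P)).symm
  have hcm : charmatrix A = F P * charmatrix D * F Q := by
    rw [charmatrix, charmatrix, hA]
    rw [mul_sub, sub_mul]
    congr 1
    · rw [hsc, mul_assoc, hPQ', mul_one]
    · rw [_root_.map_mul, _root_.map_mul]
  rw [Matrix.charpoly, Matrix.charpoly, hcm, det_mul, det_mul]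
  have : det (F P) * det (F Q) = 1 := by rw [← det_mul, hPQ', det_one]
  calc det (F P) * det (charmatrix D) * det (F Q)
      = det (F P) * det (F Q) * det (charmatrix D) := by ring
    _ = det (charmatrix D) := by rw [this, one_mul]

lemma charpoly_diagonal (d : n → ℝ) :
    (Matrix.diagonal d).charpoly = ∏ i, (X - C (d i)) := by
  have : charmatrix (Matrix.diagonal d) = Matrix.diagonal (fun i => X - C (d i)) := by
    ext i j
    by_cases h : i = j
    · subst h; simp
    · rw [charmatrix_apply_ne _ _ _ h, diagonal_apply_ne _ h, diagonal_apply_ne _ h, map_zero,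
        neg_zero]
  rw [Matrix.charpoly, this, det_diagonal]

lemma sum_abs_eig {A : Matrix n n ℝ} (hA : A.IsHermitian) {P Q : Matrix n n ℝ} {d : n → ℝ}
    (hPQ : P * Q = 1) (hAP : A * P = P * Matrix.diagonal d) :
    ∑ i, |hA.eigenvalues i| = ∑ i, |d i| := by
  -- charpoly of A equals prod over eigenvalues, via spectral theorem
  set U : Matrix n n ℝ := (hA.eigenvectorUnitary : Matrix n n ℝ) with hU
  have hUU : U * star U = 1 := (Unitary.mem_iff.mp hA.eigenvectorUnitary.2).2
  have hsUU : star U * U = 1 := (Unitary.mem_iff.mp hA.eigenvectorUnitary.2).1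
  have hspec : A = U * Matrix.diagonal hA.eigenvalues * star U := by
    have := hA.spectral_theorem
    rwa [RCLike.ofReal_real_eq_id, Function.id_comp] at this
  have hAU : A * U = U * Matrix.diagonal hA.eigenvalues := by
    conv_lhs => rw [hspec]
    rw [mul_assoc, mul_assoc, hsUU, mul_one]
  have h1 : A.charpoly = ∏ i, (X - C (hA.eigenvalues i)) := by
    rw [charpoly_conj_aux A U (star U) _ hUU hAU, _root_.charpoly_diagonal]
  have h2 : A.charpoly = ∏ i, (X - C (d i)) := by
    rw [charpoly_conj_aux A P Q _ hPQ hAP, _root_.charpoly_diagonal]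
  have hms : Multiset.map hA.eigenvalues Finset.univ.val = Multiset.map d Finset.univ.val := by
    have key : ∀ e : n → ℝ, (∏ i, (X - C (e i))) =
        ((Multiset.map e Finset.univ.val).map (fun r : ℝ => X - C r)).prod := by
      intro e
      rw [Multiset.map_map]
      rfl
    have := h1.symm.trans h2
    rw [key hA.eigenvalues, key d] at this
    have := congrArg Polynomial.roots this
    rwa [roots_multiset_prod_X_sub_C, roots_multiset_prod_X_sub_C] at this
  calc ∑ i, |hA.eigenvalues i|
      = ((Multiset.map hA.eigenvalues Finset.univ.val).map abs).sum := by
        rw [Multiset.map_map]; rfl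
    _ = ((Multiset.map d Finset.univ.val).map abs).sum := by rw [hms]
    _ = ∑ i, |d i| := by rw [Multiset.map_map]; rfl

lemma energy_formula {V : Type*} [Fintype V] [DecidableEq V] (G : SimpleGraph V)
    [inst : DecidableRel G.Adj] (P Q : Matrix V V ℝ) (d : V → ℝ) (hPQ : P * Q = 1)
    (hAP : G.adjMatrix ℝ * P = P * Matrix.diagonal d) :
    energy G = ∑ i, |d i| := by
  unfold energy adjEig
  apply sum_abs_eig _ hPQ
  have key : ∀ (h1 h2 : DecidableRel G.Adj),
      @SimpleGraph.adjMatrix ℝ V G h1 _ _ = @SimpleGraph.adjMatrix ℝ V G h2 _ _ := by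
    intro h1 h2
    ext i j
    by_cases h : G.Adj i j <;> simp [h]
  rw [key _ inst]
  exact hAP

def Jmat (k : ℕ) : Matrix (Fin k) (Fin k) ℝ := Matrix.of fun _ _ => 1

def Pmat (k : ℕ) [NeZero k] : Matrix (Fin k) (Fin k) ℝ :=
  Matrix.of fun i j => if j = 0 then 1
    else ((if i = 0 then (1 : ℝ) else 0) - (if i = j then 1 else 0))

noncomputable def Qmat (k : ℕ) [NeZero k] : Matrix (Fin k) (Fin k) ℝ :=
  Matrix.of fun i j => (k : ℝ)⁻¹ - (if i = 0 then 0 else (if i = j then 1 else 0))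

lemma PQ_eq_one (k : ℕ) [NeZero k] : Pmat k * Qmat k = 1 := by
  have hk : (k : ℝ) ≠ 0 := Nat.cast_ne_zero.mpr (NeZero.ne k)
  ext i j
  rw [Matrix.mul_apply]
  have hsplit : ∀ l : Fin k, Pmat k i l * Qmat k l j =
      (if l = 0 then (k : ℝ)⁻¹
       else ((if i = 0 then (1:ℝ) else 0) - (if i = l then 1 else 0)) *
         ((k : ℝ)⁻¹ - (if l = j then 1 else 0))) := by
    intro l
    by_cases hl : l = 0 <;> simp [Pmat, Qmat, hl]
  simp_rw [hsplit]
  rw [Finset.sum_eq_add_sum_sdiff_singleton_of_mem (Finset.mem_univ (0 : Fin k))]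
  rw [if_pos rfl]
  have hmem : ∀ l : Fin k, l ∈ Finset.univ \ {0} ↔ l ≠ 0 := by
    intro l; simp
  have hcard : (Finset.univ \ {(0 : Fin k)}).card = k - 1 := by
    rw [Finset.card_sdiff_of_subset (by simp), Finset.card_singleton, Finset.card_univ, Fintype.card_fin]
  have hk1 : ((k - 1 : ℕ) : ℝ) = (k : ℝ) - 1 := by
    have : 1 ≤ k := Nat.one_le_iff_ne_zero.mpr (NeZero.ne k)
    push_cast [this]; ring
  by_cases hi : i = 0
  · have hs : ∑ l ∈ Finset.univ \ {(0 : Fin k)},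
        (if l = 0 then (k : ℝ)⁻¹
         else ((if i = 0 then (1:ℝ) else 0) - (if i = l then 1 else 0)) *
           ((k : ℝ)⁻¹ - (if l = j then 1 else 0))) =
        ∑ l ∈ Finset.univ \ {(0 : Fin k)}, ((k : ℝ)⁻¹ - (if l = j then 1 else 0)) := by
      apply Finset.sum_congr rfl
      intro l hl
      have hl0 : l ≠ 0 := (hmem l).mp hl
      have hil : ¬ i = l := by rw [hi]; exact fun h => hl0 h.symm
      rw [if_neg hl0, if_pos hi, if_neg hil, sub_zero, one_mul]
    rw [hs, Finset.sum_sub_distrib, Finset.sum_const, hcard, nsmul_eq_mul, hk1]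
    have : ∑ l ∈ Finset.univ \ {(0 : Fin k)}, (if l = j then (1:ℝ) else 0) =
        if j ∈ Finset.univ \ {(0 : Fin k)} then 1 else 0 := Finset.sum_ite_eq' _ j (fun _ => 1)
    rw [this]
    by_cases hj : j = 0
    · subst hj
      rw [if_neg (by simp), hi, Matrix.one_apply_eq]
      field_simp
      ring
    · rw [if_pos (by simp [hj]), Matrix.one_apply_ne (by rw [hi]; exact fun h => hj h.symm)]
      field_simp
      ring
  · have hs : ∑ l ∈ Finset.univ \ {(0 : Fin k)},
        (if l = 0 then (k : ℝ)⁻¹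
         else ((if i = 0 then (1:ℝ) else 0) - (if i = l then 1 else 0)) *
           ((k : ℝ)⁻¹ - (if l = j then 1 else 0))) =
        ∑ l ∈ Finset.univ \ {(0 : Fin k)},
          ((if i = l then (1:ℝ) else 0) * (if l = j then 1 else 0)
            - (if i = l then (1:ℝ) else 0) * (k : ℝ)⁻¹) := by
      apply Finset.sum_congr rfl
      intro l hl
      have hl0 : l ≠ 0 := (hmem l).mp hl
      rw [if_neg hl0, if_neg hi]
      ring
    rw [hs, Finset.sum_sub_distrib]
    have h1 : ∑ l ∈ Finset.univ \ {(0 : Fin k)},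
        (if i = l then (1:ℝ) else 0) * (if l = j then 1 else 0) =
        if i ∈ Finset.univ \ {(0 : Fin k)} then (if i = j then (1:ℝ) else 0) else 0 := by
      rw [← Finset.sum_ite_eq _ i (fun l => if l = j then (1:ℝ) else 0)]
      apply Finset.sum_congr rfl
      intro l _
      by_cases h : i = l
      · subst h; simp
      · simp [h]
    have h2 : ∑ l ∈ Finset.univ \ {(0 : Fin k)},
        (if i = l then (1:ℝ) else 0) * (k : ℝ)⁻¹ =
        (if i ∈ Finset.univ \ {(0 : Fin k)} then (1:ℝ) else 0) * (k : ℝ)⁻¹ := by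
      rw [← Finset.sum_mul]
      congr 1
      exact Finset.sum_ite_eq _ i (fun _ => (1:ℝ))
    rw [h1, h2, if_pos ((hmem i).mpr hi), if_pos ((hmem i).mpr hi), one_mul]
    by_cases hij : i = j
    · rw [if_pos hij, hij, Matrix.one_apply_eq]; ring
    · rw [if_neg hij, Matrix.one_apply_ne hij]; ring

lemma JP_eq (k : ℕ) [NeZero k] :
    Jmat k * Pmat k = Pmat k * Matrix.diagonal (fun l => if l = 0 then (k : ℝ) else 0) := by
  ext i j
  rw [Matrix.mul_apply, Matrix.mul_apply]
  by_cases hj : j = 0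
  · subst hj
    simp [Jmat, Pmat, Matrix.diagonal]
  · have hL : ∑ l, Jmat k i l * Pmat k l j =
        ∑ l, ((if l = 0 then (1:ℝ) else 0) - (if l = j then 1 else 0)) := by
      apply Finset.sum_congr rfl
      intro l _
      simp [Jmat, Pmat, hj]
    rw [hL, Finset.sum_sub_distrib]
    rw [Finset.sum_ite_eq' Finset.univ (0 : Fin k) (fun _ => (1:ℝ)),
        Finset.sum_ite_eq' Finset.univ j (fun _ => (1:ℝ))]
    simp [Matrix.diagonal, hj]

lemma JsubOneP_eq (k : ℕ) [NeZero k] :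
    (Jmat k - 1) * Pmat k =
      Pmat k * Matrix.diagonal (fun l => if l = 0 then (k : ℝ) - 1 else -1) := by
  rw [Matrix.sub_mul, one_mul, JP_eq]
  ext i j
  rw [Matrix.sub_apply, Matrix.mul_diagonal, Matrix.mul_diagonal]
  by_cases hj : j = 0 <;> simp [hj] <;> ring

instance cmgDecidable (a m : ℕ) : DecidableRel (completeMultipartiteGraph' a m).Adj :=
  fun x y => inferInstanceAs (Decidable (x.1 ≠ y.1))

open Kronecker

lemma adjG (a m : ℕ) :
    (completeMultipartiteGraph' a m).adjMatrix ℝ = (Jmat a - 1) ⊗ₖ Jmat m := by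
  ext ⟨i, x⟩ ⟨j, y⟩
  rw [SimpleGraph.adjMatrix_apply, Matrix.kroneckerMap_apply]
  by_cases h : i = j
  · subst h
    simp [completeMultipartiteGraph', Jmat, Matrix.one_apply]
  · simp [completeMultipartiteGraph', Jmat, Matrix.one_apply, h]

lemma adjGc (a m : ℕ) :
    ((completeMultipartiteGraph' a m)ᶜ).adjMatrix ℝ =
      (1 : Matrix (Fin a) (Fin a) ℝ) ⊗ₖ (Jmat m - 1) := by
  ext ⟨i, x⟩ ⟨j, y⟩
  rw [SimpleGraph.adjMatrix_apply, Matrix.kroneckerMap_apply]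
  have hadj : ((completeMultipartiteGraph' a m)ᶜ).Adj (i, x) (j, y) ↔ i = j ∧ x ≠ y := by
    constructor
    · rintro ⟨hne, hadj⟩
      have hij : i = j := not_not.mp hadj
      exact ⟨hij, fun hxy => hne (by rw [hij, hxy])⟩
    · rintro ⟨hij, hxy⟩
      exact ⟨fun h => hxy (congrArg Prod.snd h), by simp [completeMultipartiteGraph', hij]⟩
  rw [if_congr hadj rfl rfl]
  by_cases hij : i = j
  · by_cases hxy : x = y <;>
      simp [hij, hxy, Jmat, Matrix.one_apply]
  · simp [hij, Jmat, Matrix.one_apply]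

end EnergyAux

/-- The complete multipartite graph `K_{a×m}` (with `a, m ≥ 2`) is
equienergetic with its complement iff `a = m`, in which case its energy is `2m(m-1)`. -/
theorem completeMultipartite_equienergetic_iff (a m : ℕ) (ha : 2 ≤ a) (hm : 2 ≤ m) :
    (energy (completeMultipartiteGraph' a m) = energy (completeMultipartiteGraph' a m)ᶜ ↔
      a = m) ∧
    (a = m → energy (completeMultipartiteGraph' a m) = 2 * (m : ℝ) * ((m : ℝ) - 1)) := by
  haveI : NeZero a := ⟨by omega⟩
  haveI : NeZero m := ⟨by omega⟩
  have ha1 : (1 : ℝ) ≤ (a : ℝ) := by exact_mod_cast Nat.one_le_of_lt ha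
  have hm1 : (1 : ℝ) ≤ (m : ℝ) := by exact_mod_cast Nat.one_le_of_lt hm
  -- common sums
  have sumf : ∀ (k : ℕ) [NeZero k], (1:ℝ) ≤ (k : ℝ) →
      ∑ i : Fin k, |if i = 0 then (k : ℝ) - 1 else -1| = 2 * (k : ℝ) - 2 := by
    intro k _ hk1
    have : ∀ i : Fin k, |if i = 0 then (k : ℝ) - 1 else -1| =
        1 + (if i = 0 then (k : ℝ) - 2 else 0) := by
      intro i
      by_cases hi : i = 0
      · simp [hi, abs_of_nonneg (by linarith : (0:ℝ) ≤ (k:ℝ) - 1)]; ring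
      · simp [hi]
    simp_rw [this]
    rw [Finset.sum_add_distrib, Finset.sum_const, Finset.card_univ, Fintype.card_fin,
      Finset.sum_ite_eq' Finset.univ (0 : Fin k) (fun _ => (k : ℝ) - 2),
      if_pos (Finset.mem_univ _)]
    push_cast
    ring
  have sumg : ∑ x : Fin m, |if x = 0 then (m : ℝ) else 0| = (m : ℝ) := by
    have : ∀ x : Fin m, |if x = 0 then (m : ℝ) else 0| =
        if x = 0 then (m : ℝ) else 0 := by
      intro x
      by_cases hx : x = 0 <;> simp [hx]
    simp_rw [this]
    rw [Finset.sum_ite_eq' Finset.univ (0 : Fin m) (fun _ => (m : ℝ)),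
      if_pos (Finset.mem_univ _)]
  have hG : energy (completeMultipartiteGraph' a m) = (2 * (a : ℝ) - 2) * m := by
    rw [energy_formula (completeMultipartiteGraph' a m)
      (Matrix.kroneckerMap (· * ·) (Pmat a) (Pmat m))
      (Matrix.kroneckerMap (· * ·) (Qmat a) (Qmat m))
      (fun p => (if p.1 = 0 then (a : ℝ) - 1 else -1) * (if p.2 = 0 then (m : ℝ) else 0))
      (by rw [← Matrix.mul_kronecker_mul, PQ_eq_one, PQ_eq_one, Matrix.one_kronecker_one])
      (by
        rw [adjG, ← Matrix.mul_kronecker_mul, JsubOneP_eq, JP_eq, Matrix.mul_kronecker_mul,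
          Matrix.diagonal_kronecker_diagonal])]
    rw [Fintype.sum_prod_type]
    dsimp only
    simp_rw [abs_mul]
    show ∑ x : Fin a, ∑ y : Fin m, |if x = 0 then (a:ℝ) - 1 else -1| * |if y = 0 then (m:ℝ) else 0| = (2 * (a:ℝ) - 2) * m
    simp_rw [← Finset.mul_sum]
    rw [← Finset.sum_mul, sumf a ha1, sumg]
  have hGc : energy (completeMultipartiteGraph' a m)ᶜ = (a : ℝ) * (2 * (m : ℝ) - 2) := by
    rw [energy_formula (completeMultipartiteGraph' a m)ᶜ
      (Matrix.kroneckerMap (· * ·) (1 : Matrix (Fin a) (Fin a) ℝ) (Pmat m))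
      (Matrix.kroneckerMap (· * ·) (1 : Matrix (Fin a) (Fin a) ℝ) (Qmat m))
      (fun p => (1 : ℝ) * (if p.2 = 0 then (m : ℝ) - 1 else -1))
      (by rw [← Matrix.mul_kronecker_mul, one_mul, PQ_eq_one, Matrix.one_kronecker_one])
      (by
        rw [adjGc, ← Matrix.mul_kronecker_mul, one_mul, JsubOneP_eq]
        have hdk : (Matrix.diagonal
              (fun p : Fin a × Fin m => (1 : ℝ) * (if p.2 = 0 then (m : ℝ) - 1 else -1))) =
            Matrix.kroneckerMap (· * ·) (1 : Matrix (Fin a) (Fin a) ℝ)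
              (Matrix.diagonal (fun l : Fin m => if l = 0 then (m : ℝ) - 1 else -1)) := by
          ext ⟨i, x⟩ ⟨j, y⟩
          rw [Matrix.kroneckerMap_apply]
          by_cases hij : i = j <;> by_cases hxy : x = y <;>
            simp [Matrix.diagonal_apply, Matrix.one_apply, hij, hxy, Prod.ext_iff]
        rw [hdk, ← Matrix.mul_kronecker_mul, one_mul])]
    simp_rw [one_mul]
    rw [Fintype.sum_prod_type]
    dsimp only
    simp_rw [sumf m hm1]
    rw [Finset.sum_const, Finset.card_univ, Fintype.card_fin, nsmul_eq_mul]
  constructor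
  · rw [hG, hGc]
    constructor
    · intro h
      have : (a : ℝ) = (m : ℝ) := by nlinarith
      exact_mod_cast this
    · intro h
      subst h
      ring
  · intro h
    subst h
    rw [hG]
    ring
end

section
/- Let G be a simple graph on a finite vertex type with G.IsSRGWith n k e d, and assume both G and Gᶜ are connected (G is a primitive strongly regular graph). Set α := ((e:ℝ) - (d:ℝ))^2 + 4*((k:ℝ) - (d:ℝ)). Then E(G) = E(Gᶜ) if and only if (n : ℝ) = 2*k*(Real.sqrt α + 1) / (Real.sqrt α - ((e:ℝ) - (d:ℝ))) + 1. -/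
open Finset

section Aux

open Matrix

variable {V : Type*} [Fintype V] [DecidableEq V]

lemma energy_eq_sum_abs (G : SimpleGraph V) [inst : DecidableRel G.Adj] :
    energy G = ∑ i, |(adjMatrix_isHermitian G).eigenvalues i| := by
  unfold energy adjEig
  congr!

lemma sum_eig {A : Matrix V V ℝ} (hA : A.IsHermitian) :
    ∑ i, hA.eigenvalues i = A.trace := by
  nth_rewrite 2 [show A = (hA.eigenvectorUnitary : Matrix V V ℝ) * Matrix.diagonal (RCLike.ofReal ∘ hA.eigenvalues) * star (hA.eigenvectorUnitary : Matrix V V ℝ) from hA.spectral_theorem]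
  rw [Matrix.trace_mul_cycle]
  rw [(Matrix.mem_unitaryGroup_iff').mp (hA.eigenvectorUnitary).2, Matrix.one_mul]
  simp [Matrix.trace_diagonal]

lemma sum_eig_sq {A : Matrix V V ℝ} (hA : A.IsHermitian) :
    ∑ i, (hA.eigenvalues i)^2 = (A * A).trace := by
  set f := hA.eigenvalues with hf
  set U : Matrix V V ℝ := (hA.eigenvectorUnitary : Matrix V V ℝ) with hU
  set D : Matrix V V ℝ := Matrix.diagonal (RCLike.ofReal ∘ f) with hD
  have h1 : star U * U = 1 := (Matrix.mem_unitaryGroup_iff').mp hA.eigenvectorUnitary.2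
  have h2 : A = U * D * star U := hA.spectral_theorem
  have h3 : (U * D * star U) * (U * D * star U) = U * (D * D) * star U := by
    simp only [Matrix.mul_assoc]
    rw [← Matrix.mul_assoc (star U) U, h1, Matrix.one_mul]
  rw [h2, h3, Matrix.trace_mul_cycle, h1, Matrix.one_mul]
  simp [hD, Matrix.diagonal_mul_diagonal, Matrix.trace_diagonal, sq]

lemma energy_eq_zero_of_card_one (H : SimpleGraph V) [DecidableRel H.Adj]
    (h1 : Fintype.card V = 1) : energy H = 0 := by
  haveI : Subsingleton V := Fintype.card_le_one_iff_subsingleton.mp (le_of_eq h1)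
  have hA0 : H.adjMatrix ℝ = 0 := by
    ext i j
    have hij : i = j := Subsingleton.elim i j
    subst hij
    simp
  have h2 : ((H.adjMatrix ℝ) * (H.adjMatrix ℝ)).trace = 0 := by rw [hA0]; simp
  have hs : ∑ i, ((adjMatrix_isHermitian H).eigenvalues i)^2 = 0 :=
    (sum_eig_sq (adjMatrix_isHermitian H)).trans h2
  have hz : ∀ i ∈ Finset.univ, ((adjMatrix_isHermitian H).eigenvalues i)^2 = 0 :=
    (Finset.sum_eq_zero_iff_of_nonneg (fun i _ => sq_nonneg _)).mp hs
  rw [energy_eq_sum_abs]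
  apply Finset.sum_eq_zero
  intro i _
  have := hz i (Finset.mem_univ i)
  have : (adjMatrix_isHermitian H).eigenvalues i = 0 := by
    have := sq_eq_zero_iff.mp this
    exact this
  rw [this, abs_zero]

lemma eig_mem {A : Matrix V V ℝ} (hA : A.IsHermitian)
    (kR tR dR : ℝ) (hd : dR ≠ 0)
    (hid : A * A = tR • A + (kR - dR) • (1 : Matrix V V ℝ) + dR • Matrix.of (fun _ _ => (1:ℝ)))
    (hAJ : A * Matrix.of (fun _ _ => (1:ℝ)) = kR • Matrix.of (fun _ _ => (1:ℝ)))
    (i : V) :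
    hA.eigenvalues i = kR ∨ (hA.eigenvalues i)^2 - tR * hA.eigenvalues i - (kR - dR) = 0 := by
  set J : Matrix V V ℝ := Matrix.of (fun _ _ => (1:ℝ)) with hJ
  set μ := hA.eigenvalues i with hμ
  set v : V → ℝ := ⇑(hA.eigenvectorBasis i) with hv
  have hvec : A *ᵥ v = μ • v := hA.mulVec_eigenvectorBasis i
  have hvne : ∃ j, v j ≠ 0 := by
    by_contra hc
    push_neg at hc
    exact hA.eigenvectorBasis.toBasis.ne_zero i (by ext j; exact hc j)
  obtain ⟨j0, hj0⟩ := hvne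
  have h2 : (A * A) *ᵥ v = (μ^2) • v := by
    rw [← Matrix.mulVec_mulVec, hvec, Matrix.mulVec_smul, hvec, smul_smul, sq]
  rw [hid] at h2
  have h3 : tR • (μ • v) + (kR - dR) • v + dR • (J *ᵥ v) = (μ^2) • v := by
    rw [← hvec]
    simpa [Matrix.add_mulVec, Matrix.smul_mulVec, Matrix.one_mulVec] using h2
  have hJv : J *ᵥ v = ((μ^2 - tR*μ - (kR - dR))/dR) • v := by
    have : dR • (J *ᵥ v) = (μ^2 - tR*μ - (kR - dR)) • v := by
      have := h3
      funext x
      have hx := congrFun this x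
      simp only [Pi.add_apply, Pi.smul_apply, smul_eq_mul] at hx ⊢
      ring_nf
      ring_nf at hx
      linarith
    funext x
    have hx := congrFun this x
    simp only [Pi.smul_apply, smul_eq_mul] at hx ⊢
    field_simp
    linarith
  have h4 : (A * J) *ᵥ v = kR • (J *ᵥ v) := by rw [hAJ, Matrix.smul_mulVec]
  have h5 : (A * J) *ᵥ v = A *ᵥ (J *ᵥ v) := (Matrix.mulVec_mulVec _ _ _).symm
  rw [hJv] at h4 h5
  rw [Matrix.mulVec_smul, hvec] at h5
  set c := (μ^2 - tR*μ - (kR - dR))/dR with hc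
  have h6 : (c * μ) • v = (kR * c) • v := by
    rw [← smul_smul, ← h5, h4, smul_smul, mul_comm]
  have h7 : c * μ - kR * c = 0 := by
    have := congrFun h6 j0
    simp only [Pi.smul_apply, smul_eq_mul] at this
    have : (c * μ - kR * c) * v j0 = 0 := by linarith
    rcases mul_eq_zero.mp this with h | h
    · exact h
    · exact absurd h hj0
  rcases eq_or_ne μ kR with hk | hk
  · exact Or.inl hk
  · right
    have hc0 : c = 0 := by
      rcases mul_eq_zero.mp (show c * (μ - kR) = 0 by linear_combination h7) with h | h
      · exact h
      · exact absurd (by linarith [sub_eq_zero.mp h] : μ = kR) hk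
    have := hc0
    rw [hc, div_eq_zero_iff] at this
    rcases this with h | h
    · exact h
    · exact absurd h hd

lemma energy_core [Nonempty V] {A : Matrix V V ℝ} (hA : A.IsHermitian)
    (kR tR dR : ℝ) (hd : 0 < dR) (hkd : dR < kR)
    (hdiag : ∀ i, A i i = 0)
    (hid : A * A = tR • A + (kR - dR) • (1 : Matrix V V ℝ) + dR • Matrix.of (fun _ _ => (1:ℝ)))
    (hrow : ∀ i, ∑ j, A i j = kR) :
    ∑ i, |hA.eigenvalues i| =
      (Fintype.card V : ℝ) * kR * (2 + tR + Real.sqrt (tR^2 + 4*(kR - dR)))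
        * (Real.sqrt (tR^2 + 4*(kR - dR)) - tR)
        / ((2*kR - tR + Real.sqrt (tR^2 + 4*(kR - dR))) * Real.sqrt (tR^2 + 4*(kR - dR))) := by
  set J : Matrix V V ℝ := Matrix.of (fun _ _ => (1:ℝ)) with hJdef
  have hAJ : A * J = kR • J := by
    ext i j
    simp only [Matrix.mul_apply, hJdef, Matrix.of_apply, mul_one, Matrix.smul_apply,
      smul_eq_mul]
    exact hrow i
  set nR : ℝ := (Fintype.card V : ℝ) with hnR
  have hnpos : (0:ℝ) < nR := by
    simp only [hnR]
    exact_mod_cast Fintype.card_pos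
  set δ : ℝ := Real.sqrt (tR^2 + 4*(kR - dR)) with hδ
  have hαpos : 0 < tR^2 + 4*(kR - dR) := by nlinarith [sq_nonneg tR]
  have hδpos : 0 < δ := Real.sqrt_pos.mpr hαpos
  have hδsq : δ^2 = tR^2 + 4*(kR - dR) := Real.sq_sqrt hαpos.le
  have htδ : tR < δ := by
    by_contra hcon
    push_neg at hcon
    nlinarith
  have hmtδ : -tR < δ := by
    by_contra hcon
    push_neg at hcon
    nlinarith
  set r : ℝ := (tR + δ)/2 with hr
  set s : ℝ := (tR - δ)/2 with hs
  have hr0 : 0 ≤ r := by rw [hr]; linarith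
  have hs0 : s < 0 := by rw [hs]; linarith
  have hk0 : 0 < kR := lt_trans hd hkd
  have hqk : kR^2 - tR*kR - (kR - dR) = dR * nR := by
    have h1 : A *ᵥ (fun _ => (1:ℝ)) = fun _ => kR := by
      funext x
      simp only [Matrix.mulVec, dotProduct, mul_one]
      exact hrow x
    have h2 : (A * A) *ᵥ (fun _ => (1:ℝ)) = fun _ => kR^2 := by
      rw [← Matrix.mulVec_mulVec, h1]
      funext x
      have : (fun (_:V) => kR) = kR • (fun (_:V) => (1:ℝ)) := by funext y; simp
      rw [this, Matrix.mulVec_smul, h1]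
      simp [sq]
    have h3 := congrFun h2 (Classical.arbitrary V)
    rw [hid] at h3
    simp only [Matrix.add_mulVec, Matrix.smul_mulVec, Matrix.one_mulVec, h1,
      Pi.add_apply, Pi.smul_apply, smul_eq_mul] at h3
    have hJ1 : (J *ᵥ (fun _ => (1:ℝ))) (Classical.arbitrary V) = nR := by
      simp [hJdef, Matrix.mulVec, dotProduct, hnR, Finset.card_univ]
    rw [hJ1] at h3
    nlinarith [h3]
  have heig : ∀ i, hA.eigenvalues i = kR ∨ hA.eigenvalues i = r ∨ hA.eigenvalues i = s := by
    intro i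
    rcases eig_mem hA kR tR dR hd.ne' hid hAJ i with h | h
    · exact Or.inl h
    · right
      set μ := hA.eigenvalues i
      have : (μ - r) * (μ - s) = 0 := by
        have hsum : r + s = tR := by rw [hr, hs]; ring
        have hrs : r * s = -(kR - dR) := by
          rw [hr, hs]
          linear_combination (-1/4 : ℝ) * hδsq
        linear_combination h - μ * hsum + hrs
      rcases mul_eq_zero.mp this with h' | h'
      · exact Or.inl (by linarith [sub_eq_zero.mp h'])
      · exact Or.inr (by linarith [sub_eq_zero.mp h'])
  have hks : kR ≠ s := by linarith
  have hrs' : r ≠ s := by rw [hr, hs]; intro hcon; nlinarith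
  have htr0 : ∑ i, hA.eigenvalues i = 0 := by
    rw [sum_eig hA]
    have : A.trace = ∑ i, A i i := rfl
    rw [this]
    simp [hdiag]
  have htr2 : ∑ i, (hA.eigenvalues i)^2 = nR * kR := by
    rw [sum_eig_sq hA, hid]
    have : (tR • A + (kR - dR) • (1 : Matrix V V ℝ) + dR • J).trace
        = ∑ i, (tR * A i i + (kR - dR) * (1 : Matrix V V ℝ) i i + dR * J i i) := by
      simp [Matrix.trace, Matrix.diag]
    rw [this]
    have : ∀ i : V, tR * A i i + (kR - dR) * (1 : Matrix V V ℝ) i i + dR * J i i = kR := by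
      intro i
      simp [hdiag i, Matrix.one_apply, hJdef]
    rw [Finset.sum_congr rfl (fun i _ => this i)]
    simp [Finset.card_univ, hnR, mul_comm]
  have hE : ∑ i, |hA.eigenvalues i|
      = -2*s*(∑ i, (if hA.eigenvalues i = s then (1:ℝ) else 0)) := by
    have hpt : ∀ i, |hA.eigenvalues i|
        = hA.eigenvalues i - 2*s*(if hA.eigenvalues i = s then (1:ℝ) else 0) := by
      intro i
      rcases heig i with h | h | h <;> rw [h]
      · rw [if_neg hks, abs_of_nonneg hk0.le]; ring
      · rw [if_neg hrs', abs_of_nonneg hr0]; ring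
      · rw [if_pos rfl, abs_of_neg hs0]; ring
    rw [Finset.sum_congr rfl (fun i _ => hpt i), Finset.sum_sub_distrib, htr0,
      ← Finset.mul_sum]
    ring
  have hg : (∑ i, (if hA.eigenvalues i = s then (1:ℝ) else 0)) * ((s - kR)*(s - r))
      = nR * kR * (1 + r) := by
    have hpt : ∀ i, (hA.eigenvalues i)^2
        = (kR + r) * hA.eigenvalues i - kR*r
          + ((s - kR)*(s - r)) * (if hA.eigenvalues i = s then (1:ℝ) else 0) := by
      intro i
      rcases heig i with h | h | h <;> rw [h]
      · rw [if_neg hks]; ring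
      · rw [if_neg hrs']; ring
      · rw [if_pos rfl]; ring
    have hq : ∑ i, ((s - kR)*(s - r)) * (if hA.eigenvalues i = s then (1:ℝ) else 0)
        = ∑ i, ((hA.eigenvalues i)^2 - (kR + r) * hA.eigenvalues i + kR*r) := by
      refine Finset.sum_congr rfl (fun i _ => ?_)
      linear_combination (-1 : ℝ) * hpt i
    have e1 : ∑ i, ((s - kR)*(s - r)) * (if hA.eigenvalues i = s then (1:ℝ) else 0)
        = ((s - kR)*(s - r)) * ∑ i, (if hA.eigenvalues i = s then (1:ℝ) else 0) := by
      rw [Finset.mul_sum]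
    have e2 : ∑ i, ((hA.eigenvalues i)^2 - (kR + r) * hA.eigenvalues i + kR*r)
        = nR * kR - (kR + r) * 0 + nR * (kR * r) := by
      rw [Finset.sum_add_distrib, Finset.sum_sub_distrib, htr2, Finset.sum_const,
        Finset.card_univ, nsmul_eq_mul, ← Finset.mul_sum, htr0, ← hnR]
    linear_combination hq + e2 - e1
  have h2k : 0 < 2*kR - tR + δ := by linarith
  have hden : (2*kR - tR + δ) * δ ≠ 0 := by positivity
  rw [hE, eq_div_iff hden]
  rw [hr] at hg
  rw [hs] at hg ⊢
  linear_combination (2*(δ - tR)) * hg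

end Aux

section Comb

open SimpleGraph

variable {V : Type*} [Fintype V] [DecidableEq V] {G : SimpleGraph V} [DecidableRel G.Adj]
variable {n k e d : ℕ}

omit [DecidableEq V] [DecidableRel G.Adj] in
lemma exists_adj_of_conn (hG : G.Connected) (hn : 2 ≤ Fintype.card V) :
    ∃ u v, G.Adj u v := by
  obtain ⟨u, v, huv⟩ := Fintype.exists_pair_of_one_lt_card (show 1 < Fintype.card V by omega)
  obtain ⟨w⟩ := hG.preconnected u v
  cases w with
  | nil => exact absurd rfl huv
  | cons h p => exact ⟨_, _, h⟩

omit [Fintype V] [DecidableEq V] [DecidableRel G.Adj] in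
lemma all_adj_of_trans (hG : G.Connected)
    (htrans : ∀ a b c, G.Adj a b → G.Adj b c → a ≠ c → G.Adj a c) :
    ∀ u v, u ≠ v → G.Adj u v := by
  intro u v huv
  obtain ⟨w⟩ := hG.preconnected u v
  revert huv
  induction w with
  | nil => intro huv; exact absurd rfl huv
  | @cons a b c hab p ih =>
    intro hac
    by_cases hb : b = c
    · subst hb; exact hab
    · exact htrans _ _ _ hab (ih hb) hac

lemma card_common_eq_inter (u v : V) :
    Fintype.card (G.commonNeighbors u v) = #(G.neighborFinset u ∩ G.neighborFinset v) := by
  rw [← Set.toFinset_card]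
  congr 1
  ext x
  simp [SimpleGraph.mem_commonNeighbors, SimpleGraph.mem_neighborFinset]

lemma srg_d_bounds (h : G.IsSRGWith n k e d) (hG : G.Connected) (hGc : Gᶜ.Connected)
    (hn : 2 ≤ n) : 0 < d ∧ d < k := by
  have hcard : Fintype.card V = n := h.card
  have hn2 : 2 ≤ Fintype.card V := by omega
  have hd0 : 0 < d := by
    by_contra hd
    push_neg at hd
    have hd' : d = 0 := by omega
    have htrans : ∀ a b c, G.Adj a b → G.Adj b c → a ≠ c → G.Adj a c := by
      intro a b c hab hbc hac
      by_contra hnadj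
      have hcc := h.of_not_adj hac hnadj
      have hb : b ∈ G.commonNeighbors a c := ⟨hab, hbc.symm⟩
      have : 0 < Fintype.card (G.commonNeighbors a c) :=
        Fintype.card_pos_iff.mpr ⟨⟨b, hb⟩⟩
      omega
    obtain ⟨u, v, huv⟩ := exists_adj_of_conn hGc hn2
    rw [SimpleGraph.compl_adj] at huv
    exact huv.2 (all_adj_of_trans hG htrans u v huv.1)
  have hdk : d ≤ k := by
    obtain ⟨u, v, huv⟩ := exists_adj_of_conn hGc hn2
    rw [SimpleGraph.compl_adj] at huv
    have h1 := SimpleGraph.card_commonNeighbors_le_degree_left G u v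
    rw [h.of_not_adj huv.1 huv.2, h.regular u] at h1
    exact h1
  have hne' : d ≠ k := by
    intro hdkeq
    have hN : ∀ x y : V, x ≠ y → ¬G.Adj x y → G.neighborFinset x = G.neighborFinset y := by
      intro x y hxy hnadj
      have hcc := h.of_not_adj hxy hnadj
      rw [card_common_eq_inter] at hcc
      have h1 : G.neighborFinset x ∩ G.neighborFinset y = G.neighborFinset x := by
        apply Finset.eq_of_subset_of_card_le (Finset.inter_subset_left)
        rw [hcc, SimpleGraph.card_neighborFinset_eq_degree, h.regular x]
        omega
      have h2 : G.neighborFinset x ∩ G.neighborFinset y = G.neighborFinset y := by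
        apply Finset.eq_of_subset_of_card_le (Finset.inter_subset_right)
        rw [hcc, SimpleGraph.card_neighborFinset_eq_degree, h.regular y]
        omega
      rw [← h1, h2]
    have htrans : ∀ a b c, Gᶜ.Adj a b → Gᶜ.Adj b c → a ≠ c → Gᶜ.Adj a c := by
      intro a b c hab hbc hac
      rw [SimpleGraph.compl_adj] at hab hbc ⊢
      refine ⟨hac, fun hadj => ?_⟩
      have hNab := hN a b hab.1 hab.2
      have hc : c ∈ G.neighborFinset a := by rwa [SimpleGraph.mem_neighborFinset]
      rw [hNab, SimpleGraph.mem_neighborFinset] at hc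
      exact hbc.2 hc
    obtain ⟨u, v, huv⟩ := exists_adj_of_conn hG hn2
    have := all_adj_of_trans hGc htrans u v huv.ne
    rw [SimpleGraph.compl_adj] at this
    exact this.2 huv
  exact ⟨hd0, lt_of_le_of_ne hdk hne'⟩

lemma srg_card_ineqs (h : G.IsSRGWith n k e d) (hG : G.Connected) (hGc : Gᶜ.Connected)
    (hn : 2 ≤ n) : k + 1 ≤ n ∧ 2*k + 2 ≤ n + d ∧ 2*k ≤ n + e ∧ e ≤ k := by
  have hcard : Fintype.card V = n := h.card
  have hn2 : 2 ≤ Fintype.card V := by omega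
  have hne : Nonempty V := Fintype.card_pos_iff.mp (by omega)
  refine ⟨?_, ?_, ?_, ?_⟩
  · obtain ⟨u⟩ := hne
    have h1 : #(insert u (G.neighborFinset u)) = k + 1 := by
      rw [Finset.card_insert_of_notMem (G.notMem_neighborFinset_self u),
        SimpleGraph.card_neighborFinset_eq_degree, h.regular u]
    have h2 := Finset.card_le_univ (insert u (G.neighborFinset u))
    rw [h1, hcard] at h2
    exact h2
  · obtain ⟨u, v, huv⟩ := exists_adj_of_conn hGc hn2
    rw [SimpleGraph.compl_adj] at huv
    have hunion := Finset.card_union_add_card_inter (G.neighborFinset u) (G.neighborFinset v)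
    rw [SimpleGraph.card_neighborFinset_eq_degree, SimpleGraph.card_neighborFinset_eq_degree,
      h.regular u, h.regular v, ← card_common_eq_inter, h.of_not_adj huv.1 huv.2] at hunion
    have hu : u ∉ G.neighborFinset u ∪ G.neighborFinset v := by
      simp only [Finset.mem_union, SimpleGraph.mem_neighborFinset]
      rintro (hx | hx)
      · exact G.irrefl hx
      · exact huv.2 (hx.symm)
    have hv : v ∉ insert u (G.neighborFinset u ∪ G.neighborFinset v) := by
      simp only [Finset.mem_insert, Finset.mem_union, SimpleGraph.mem_neighborFinset]
      rintro (hx | hx | hx)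
      · exact huv.1 hx.symm
      · exact huv.2 hx
      · exact G.irrefl hx
    have hcard2 : #(insert v (insert u (G.neighborFinset u ∪ G.neighborFinset v)))
        = #(G.neighborFinset u ∪ G.neighborFinset v) + 2 := by
      rw [Finset.card_insert_of_notMem hv, Finset.card_insert_of_notMem hu]
    have h2 := Finset.card_le_univ (insert v (insert u (G.neighborFinset u ∪ G.neighborFinset v)))
    rw [hcard2, hcard] at h2
    omega
  · obtain ⟨u, v, huv⟩ := exists_adj_of_conn hG hn2
    have hunion := Finset.card_union_add_card_inter (G.neighborFinset u) (G.neighborFinset v)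
    rw [SimpleGraph.card_neighborFinset_eq_degree, SimpleGraph.card_neighborFinset_eq_degree,
      h.regular u, h.regular v, ← card_common_eq_inter, h.of_adj u v huv] at hunion
    have h2 := Finset.card_le_univ (G.neighborFinset u ∪ G.neighborFinset v)
    rw [hcard] at h2
    omega
  · obtain ⟨u, v, huv⟩ := exists_adj_of_conn hG hn2
    have h1 := SimpleGraph.card_commonNeighbors_le_degree_left G u v
    rw [h.of_adj u v huv, h.regular u] at h1
    exact h1

end Comb

set_option maxHeartbeats 2000000 in
/-- A primitive strongly regular graph `srg(n,k,e,d)` is equienergetic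
with its complement iff `n = 2k(√α + 1)/(√α - (e - d)) + 1`, where
`α = (e-d)² + 4(k-d)`. -/
theorem srg_equienergetic_iff {V : Type*} [Fintype V] [DecidableEq V]
    (G : SimpleGraph V) [DecidableRel G.Adj] (n k e d : ℕ)
    (h : G.IsSRGWith n k e d) (hG : G.Connected) (hGc : Gᶜ.Connected) :
    energy G = energy Gᶜ ↔
      (n : ℝ) = 2 * (k : ℝ) *
          (Real.sqrt (((e : ℝ) - (d : ℝ)) ^ 2 + 4 * ((k : ℝ) - (d : ℝ))) + 1) /
          (Real.sqrt (((e : ℝ) - (d : ℝ)) ^ 2 + 4 * ((k : ℝ) - (d : ℝ))) -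
            ((e : ℝ) - (d : ℝ))) + 1 := by
  haveI hnonempty : Nonempty V := hG.nonempty
  have hcard : Fintype.card V = n := h.card
  have hn1 : 1 ≤ n := by rw [← hcard]; exact Fintype.card_pos
  rcases lt_or_ge n 2 with hn | hn2
  · -- trivial one-vertex case
    have hn1' : n = 1 := by omega
    have hk0 : k = 0 := by
      obtain ⟨v⟩ := hnonempty
      have h1 := h.regular v
      have h2 : G.degree v < Fintype.card V := G.degree_lt_card_verts v
      omega
    have hE1 : energy G = 0 := energy_eq_zero_of_card_one G (by omega)
    have hE2 : energy Gᶜ = 0 := energy_eq_zero_of_card_one Gᶜ (by omega)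
    apply iff_of_true (by rw [hE1, hE2])
    rw [hn1', hk0]
    norm_num
  · -- main case
    obtain ⟨hd0, hdk⟩ := srg_d_bounds h hG hGc hn2
    obtain ⟨hk1n, h2kd, h2ke, heK⟩ := srg_card_ineqs h hG hGc hn2
    have hGcc : Gᶜᶜ.Connected := by rw [compl_compl]; exact hG
    have hcompl := h.compl
    obtain ⟨hd0', hdk'⟩ := srg_d_bounds hcompl hGc hGcc hn2
    set nR : ℝ := (n : ℝ) with hnRdef
    set kR : ℝ := (k : ℝ) with hkRdef
    set eR : ℝ := (e : ℝ) with heRdef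
    set dR : ℝ := (d : ℝ) with hdRdef
    -- cast equalities for complement parameters
    have hk'cast : ((n - k - 1 : ℕ) : ℝ) = nR - kR - 1 := by
      have hx : n - k - 1 + (k + 1) = n := by omega
      have := congrArg (fun m : ℕ => (m : ℝ)) hx
      push_cast at this
      linarith
    have he'cast : ((n - (2*k - d) - 2 : ℕ) : ℝ) = nR - 2*kR + dR - 2 := by
      have hx : n - (2*k - d) - 2 + (2*k + 2) = n + d := by omega
      have := congrArg (fun m : ℕ => (m : ℝ)) hx
      push_cast at this
      linarith
    have hd'cast : ((n - (2*k - e) : ℕ) : ℝ) = nR - 2*kR + eR := by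
      have hx : n - (2*k - e) + 2*k = n + e := by omega
      have := congrArg (fun m : ℕ => (m : ℝ)) hx
      push_cast at this
      linarith
    -- real-number parameter facts
    have hd0R : (0:ℝ) < dR := by rw [hdRdef]; exact_mod_cast hd0
    have hkdR : dR < kR := by rw [hdRdef, hkRdef]; exact_mod_cast hdk
    have hd0R' : (0:ℝ) < nR - 2*kR + eR := by
      rw [← hd'cast]; exact_mod_cast hd0'
    have hkdR' : nR - 2*kR + eR < nR - kR - 1 := by
      rw [← hd'cast, ← hk'cast]; exact_mod_cast hdk'
    -- the all-ones matrix
    set J : Matrix V V ℝ := Matrix.of (fun _ _ => (1:ℝ)) with hJdef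
    have hsumJ : (1 : Matrix V V ℝ) + G.adjMatrix ℝ + Gᶜ.adjMatrix ℝ = J := by
      ext i j
      by_cases hij : i = j
      · subst hij
        simp [hJdef, Matrix.one_apply]
      · by_cases hadj : G.Adj i j
        · simp [hJdef, Matrix.one_apply_ne hij, SimpleGraph.compl_adj, hij, hadj]
        · simp [hJdef, Matrix.one_apply_ne hij, SimpleGraph.compl_adj, hij, hadj]
    have hAcc : Gᶜᶜ.adjMatrix ℝ = G.adjMatrix ℝ := by
      ext i j
      by_cases hij : i = j
      · subst hij; simp
      · by_cases hadj : G.Adj i j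
        · simp [SimpleGraph.compl_adj, hij, hadj]
        · simp [SimpleGraph.compl_adj, hij, hadj]
    -- matrix identity for G
    have hmeq := h.matrix_eq (α := ℝ)
    have hidG : G.adjMatrix ℝ * G.adjMatrix ℝ
        = (eR - dR) • G.adjMatrix ℝ + (kR - dR) • (1 : Matrix V V ℝ) + dR • J := by
      have hC : Gᶜ.adjMatrix ℝ = J - 1 - G.adjMatrix ℝ := by rw [← hsumJ]; abel
      rw [← pow_two, hmeq, hC]
      rw [← Nat.cast_smul_eq_nsmul ℝ k (1 : Matrix V V ℝ),
        ← Nat.cast_smul_eq_nsmul ℝ e (G.adjMatrix ℝ),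
        ← Nat.cast_smul_eq_nsmul ℝ d (J - 1 - G.adjMatrix ℝ)]
      module
    -- matrix identity for Gᶜ
    have hmeqc := hcompl.matrix_eq (α := ℝ)
    have hidC : Gᶜ.adjMatrix ℝ * Gᶜ.adjMatrix ℝ
        = (dR - eR - 2) • Gᶜ.adjMatrix ℝ
          + ((nR - kR - 1) - (nR - 2*kR + eR)) • (1 : Matrix V V ℝ)
          + (nR - 2*kR + eR) • J := by
      have hA : G.adjMatrix ℝ = J - 1 - Gᶜ.adjMatrix ℝ := by rw [← hsumJ]; abel
      rw [← pow_two, hmeqc, hAcc, hA]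
      rw [← Nat.cast_smul_eq_nsmul ℝ (n - k - 1) (1 : Matrix V V ℝ),
        ← Nat.cast_smul_eq_nsmul ℝ (n - (2*k - d) - 2) (Gᶜ.adjMatrix ℝ),
        ← Nat.cast_smul_eq_nsmul ℝ (n - (2*k - e)) (J - 1 - Gᶜ.adjMatrix ℝ),
        hk'cast, he'cast, hd'cast]
      module
    -- row sums
    have hrowG : ∀ i, ∑ j, G.adjMatrix ℝ i j = kR := by
      intro i
      rw [hkRdef]
      have h1 := SimpleGraph.adjMatrix_mulVec_const_apply_of_regular (α := ℝ) (a := (1:ℝ))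
        h.regular (v := i)
      simpa [Matrix.mulVec, dotProduct] using h1
    have hrowC : ∀ i, ∑ j, Gᶜ.adjMatrix ℝ i j = nR - kR - 1 := by
      intro i
      have h1 := SimpleGraph.adjMatrix_mulVec_const_apply_of_regular (α := ℝ) (a := (1:ℝ))
        hcompl.regular (v := i)
      rw [← hk'cast]
      simpa [Matrix.mulVec, dotProduct] using h1
    have hdiagG : ∀ i, G.adjMatrix ℝ i i = 0 := by intro i; simp
    have hdiagC : ∀ i, Gᶜ.adjMatrix ℝ i i = 0 := by intro i; simp
    -- energies via the core lemma
    have hEG := energy_core (adjMatrix_isHermitian G) kR (eR - dR) dR hd0R hkdR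
      hdiagG hidG hrowG
    have hEC := energy_core (adjMatrix_isHermitian Gᶜ) (nR - kR - 1) (dR - eR - 2)
      (nR - 2*kR + eR) hd0R' (by linarith) hdiagC hidC hrowC
    rw [← energy_eq_sum_abs] at hEG hEC
    rw [hcard] at hEG hEC
    -- identify the two square roots
    have harg : (dR - eR - 2)^2 + 4*((nR - kR - 1) - (nR - 2*kR + eR))
        = (eR - dR)^2 + 4*(kR - dR) := by ring
    rw [harg] at hEC
    set δ : ℝ := Real.sqrt ((eR - dR)^2 + 4*(kR - dR)) with hδdef
    -- positivity facts
    have hαpos : 0 < (eR - dR)^2 + 4*(kR - dR) := by nlinarith [sq_nonneg (eR - dR)]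
    have hδpos : 0 < δ := Real.sqrt_pos.mpr hαpos
    have hδsq : δ^2 = (eR - dR)^2 + 4*(kR - dR) := Real.sq_sqrt hαpos.le
    have hsqlt : (eR - dR)^2 < δ^2 := by nlinarith [hδsq, hkdR]
    have htδ : eR - dR < δ := by
      by_contra hcon
      push_neg at hcon
      rcases le_or_gt (eR - dR) 0 with hle | hlt
      · linarith
      · have h2 := mul_le_mul hcon hcon hδpos.le hlt.le
        nlinarith [h2, hsqlt]
    have hmtδ : -(eR - dR) < δ := by
      by_contra hcon
      push_neg at hcon
      have h2 := mul_le_mul hcon hcon hδpos.le (hδpos.le.trans hcon)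
      nlinarith [h2, hsqlt]
    have hk0R : 0 < kR := lt_trans hd0R hkdR
    have hnpos : (0:ℝ) < nR := by rw [hnRdef]; exact_mod_cast (by omega : 0 < n)
    have hn2R : (2:ℝ) ≤ nR := by rw [hnRdef]; exact_mod_cast hn2
    have hden1 : 0 < (2*kR - (eR - dR) + δ) * δ := by
      apply mul_pos _ hδpos
      linarith
    have hsqlt' : (dR - eR - 2)^2 < δ^2 := by nlinarith [hδsq, hkdR']
    have htδ' : dR - eR - 2 < δ := by
      by_contra hcon
      push_neg at hcon
      have h2 := mul_le_mul hcon hcon hδpos.le (hδpos.le.trans hcon)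
      nlinarith [h2, hsqlt']
    have hden2 : 0 < (2*(nR - kR - 1) - (dR - eR - 2) + δ) * δ := by
      apply mul_pos _ hδpos
      have hk0R' : 0 < nR - kR - 1 := lt_trans hd0R' hkdR'
      linarith
    rw [hEG, hEC, div_eq_div_iff hden1.ne' hden2.ne']
    have hδt0 : (0:ℝ) < δ - (eR - dR) := by linarith
    constructor
    · intro hEq
      have h0 : (nR * δ * (δ - (eR - dR)) * (δ + (eR - dR) + 2))
          * (2*kR*(δ+1) - (nR-1)*(δ - (eR - dR))) = 0 := by
        linear_combination hEq
      have hcpos : 0 < nR * δ * (δ - (eR - dR)) * (δ + (eR - dR) + 2) := by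
        apply mul_pos (mul_pos (mul_pos hnpos hδpos) hδt0)
        linarith
      rcases mul_eq_zero.mp h0 with hc | hL
      · exact absurd hc hcpos.ne'
      · have hfin : nR - 1 = 2*kR*(δ+1)/(δ - (eR - dR)) := by
          rw [eq_div_iff hδt0.ne']
          linarith
        linarith [hfin]
    · intro hEq
      have h2' : (nR - 1) * (δ - (eR - dR)) = 2*kR*(δ+1) := by
        have h1' : nR - 1 = 2*kR*(δ+1)/(δ - (eR - dR)) := by linarith
        rw [eq_div_iff hδt0.ne'] at h1'
        linarith
      linear_combination (-(nR * δ * (δ - (eR - dR)) * (δ + (eR - dR) + 2))) * h2'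
end

section
/- Let G be a simple graph on a finite vertex type with G.IsSRGWith n k e d, with 2 ≤ n, and assume both G and Gᶜ are connected. Then E(G) = E(Gᶜ) if and only if one of the following holds: (a) 1 ≤ d, n = 4*d+1, k = 2*d and e + 1 = d (G is a conference graph); or (b) there exist h ℓ : ℤ with 1 ≤ ℓ, ℓ ∉ {h, -h, h+1, -(h+1)}, (n:ℤ) = 4*ℓ^2, (k:ℤ) = (ℓ-h)*(2*ℓ-1), (e:ℤ) = (d:ℤ) + 2*h and (d:ℤ) = (ℓ-h)*(ℓ-h-1); or (c) there exist h ℓ : ℤ with h ≠ 0, 1 ≤ ℓ, ℓ ∉ {h, -h, -(h+1), h-1}, (n:ℤ) = (2*ℓ+1)^2, (k:ℤ) = 2*ℓ*(ℓ-h+1), (e:ℤ) = (d:ℤ) + 2*h - 1 and (d:ℤ) = (ℓ-h)*(ℓ-h+1). -/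
open Finset

section Auxiliary

open Matrix SimpleGraph

set_option linter.unusedSectionVars false

variable {V : Type*} [Fintype V] [DecidableEq V]

lemma sum_eig_eq_trace (A : Matrix V V ℝ) (hA : A.IsHermitian) :
    ∑ i, hA.eigenvalues i = A.trace := by
  conv_rhs => rw [hA.spectral_theorem, Unitary.conjStarAlgAut_apply]
  rw [Matrix.trace_mul_cycle,
    show (star (hA.eigenvectorUnitary : Matrix V V ℝ)) * hA.eigenvectorUnitary = 1 from
      (Matrix.mem_unitaryGroup_iff').mp hA.eigenvectorUnitary.2,
    one_mul, Matrix.trace_diagonal]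
  simp [RCLike.ofReal_real_eq_id]

lemma sum_sq_eig_eq_trace (A : Matrix V V ℝ) (hA : A.IsHermitian) :
    ∑ i, (hA.eigenvalues i)^2 = (A*A).trace := by
  set U : Matrix V V ℝ := (hA.eigenvectorUnitary : Matrix V V ℝ) with hUdef
  set D : Matrix V V ℝ := diagonal (RCLike.ofReal ∘ hA.eigenvalues) with hD
  have h : A = U * D * star U := hA.spectral_theorem
  have hU : star U * U = 1 := (Matrix.mem_unitaryGroup_iff').mp hA.eigenvectorUnitary.2
  have key : A * A = U * (D * D) * star U := by
    rw [h]
    calc U * D * star U * (U * D * star U) = U * (D * ((star U * U) * (D * star U))) := by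
          simp only [mul_assoc]
      _ = U * (D * D) * star U := by rw [hU, one_mul]; simp only [mul_assoc]
  rw [key, Matrix.trace_mul_cycle, ← mul_assoc, hU, one_mul, diagonal_mul_diagonal,
    Matrix.trace_diagonal]
  simp [RCLike.ofReal_real_eq_id, sq]

lemma eig_cubic (A : Matrix V V ℝ) (a b c : ℝ)
    (hM : (A - a•1) * (A*A - b•A - c•1) = 0) (v : V → ℝ) (hv : v ≠ 0) (lam : ℝ)
    (hAv : A *ᵥ v = lam • v) : (lam - a) * (lam*lam - b*lam - c) = 0 := by
  have h1 : (A*A - b•A - c•(1 : Matrix V V ℝ)) *ᵥ v = (lam*lam - b*lam - c) • v := by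
    simp only [sub_mulVec, smul_mulVec, one_mulVec, ← mulVec_mulVec, hAv, mulVec_smul]
    module
  have h2 : ((A - a•(1:Matrix V V ℝ)) * (A*A - b•A - c•1)) *ᵥ v
      = ((lam - a) * (lam*lam - b*lam - c)) • v := by
    rw [← mulVec_mulVec, h1, mulVec_smul, sub_mulVec, hAv, smul_mulVec, one_mulVec]
    module
  rw [hM, zero_mulVec] at h2
  exact (smul_eq_zero.mp h2.symm).resolve_right hv

lemma srg_matrix_cubic (G : SimpleGraph V) [DecidableRel G.Adj] {n k e d : ℕ}
    (h : G.IsSRGWith n k e d) :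
    (G.adjMatrix ℝ - (k:ℝ)•1) *
      (G.adjMatrix ℝ * G.adjMatrix ℝ - ((e:ℝ)-(d:ℝ))•G.adjMatrix ℝ - ((k:ℝ)-(d:ℝ))•1) = 0 := by
  have hm := h.matrix_eq (α := ℝ)
  rw [sq] at hm
  have hcompl : Gᶜ.adjMatrix ℝ = (G.adjMatrix ℝ).compl := by
    ext u v
    simp [Matrix.compl, adjMatrix_apply, compl_adj]
    by_cases huv : u = v
    · simp [huv]
    · by_cases ha : G.Adj u v <;> simp [ha, huv]
  have hJ : G.adjMatrix ℝ * G.adjMatrix ℝ - ((e:ℝ)-(d:ℝ))•G.adjMatrix ℝ - ((k:ℝ)-(d:ℝ))•1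
      = (d:ℝ) • (Matrix.of fun _ _ ↦ (1:ℝ)) := by
    rw [show (Matrix.of fun _ _ ↦ (1:ℝ)) = Matrix.of (1 : V → V → ℝ) from rfl,
      ← G.one_add_adjMatrix_add_compl_adjMatrix_eq_allOnes (α := ℝ), ← hcompl, hm]
    push_cast [← Nat.cast_smul_eq_nsmul ℝ]
    module
  rw [hJ, Matrix.mul_smul, sub_mul]
  have hAJ : G.adjMatrix ℝ * (Matrix.of fun _ _ ↦ (1:ℝ))
      = (k:ℝ) • (Matrix.of fun _ _ ↦ (1:ℝ)) := by
    ext u v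
    rw [adjMatrix_mul_apply]
    simp [h.regular u]
  have h1J : ((k:ℝ)•(1 : Matrix V V ℝ)) * (Matrix.of fun _ _ ↦ (1:ℝ))
      = (k:ℝ) • (Matrix.of fun _ _ ↦ (1:ℝ)) := by
    rw [smul_mul, one_mul]
  rw [hAJ, h1J, sub_self, smul_zero]

lemma adjMatrix_classical_eq (G : SimpleGraph V) [inst : DecidableRel G.Adj] :
    (@SimpleGraph.adjMatrix ℝ V G (fun a b => Classical.propDecidable (G.Adj a b)) _ _)
      = G.adjMatrix ℝ := by
  ext u v
  unfold SimpleGraph.adjMatrix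
  simp only [Matrix.of_apply]
  by_cases h : G.Adj u v <;> simp [h]

lemma energy_master (G : SimpleGraph V) [DecidableRel G.Adj] {n k e d : ℕ}
    (h : G.IsSRGWith n k e d) (r s : ℝ)
    (hsum : r + s = (e:ℝ) - d) (hprod : r * s = (d:ℝ) - k)
    (hr0 : 0 ≤ r) (hs0 : s < 0) (hk1 : 1 ≤ (k:ℝ)) :
    energy G * ((k - s) * (r - s)) = (-2*s) * n * k * (1+r) := by
  have hA' : (@SimpleGraph.adjMatrix ℝ V G
      (fun a b => Classical.propDecidable (G.Adj a b)) _ _).IsHermitian :=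
    @adjMatrix_isHermitian V _ G (fun a b => Classical.propDecidable (G.Adj a b))
  have hE : adjEig G = hA'.eigenvalues := rfl
  have hAC : (@SimpleGraph.adjMatrix ℝ V G (fun a b => Classical.propDecidable (G.Adj a b)) _ _)
      = G.adjMatrix ℝ := adjMatrix_classical_eq G
  have hcard : Fintype.card V = n := h.card
  have hsum0 : ∑ i, adjEig G i = 0 := by
    rw [hE, sum_eig_eq_trace _ hA', hAC, SimpleGraph.trace_adjMatrix]
  have hm := h.matrix_eq (α := ℝ)
  rw [sq] at hm
  have hsumsq : ∑ i, (adjEig G i)^2 = (n:ℝ) * k := by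
    rw [hE, sum_sq_eig_eq_trace _ hA', hAC, hm]
    rw [Matrix.trace_add, Matrix.trace_add, Matrix.trace_smul, Matrix.trace_smul,
      Matrix.trace_smul, SimpleGraph.trace_adjMatrix, SimpleGraph.trace_adjMatrix,
      Matrix.trace_one, hcard]
    simp [mul_comm]
  have hroot : ∀ i, (adjEig G i - k) * ((adjEig G i - r) * (adjEig G i - s)) = 0 := by
    intro i
    have hv : G.adjMatrix ℝ *ᵥ ⇑(hA'.eigenvectorBasis i)
        = hA'.eigenvalues i • ⇑(hA'.eigenvectorBasis i) := by
      rw [← hAC]; exact hA'.mulVec_eigenvectorBasis i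
    have hvne : (⇑(hA'.eigenvectorBasis i) : V → ℝ) ≠ 0 :=
      fun h0 => hA'.eigenvectorBasis.orthonormal.ne_zero i (by simpa using h0)
    have hc := eig_cubic (G.adjMatrix ℝ) (k:ℝ) ((e:ℝ)-(d:ℝ)) ((k:ℝ)-(d:ℝ))
      (srg_matrix_cubic G h) _ hvne _ hv
    have hEi : adjEig G i = hA'.eigenvalues i := rfl
    rw [hEi]
    set x := hA'.eigenvalues i with hx
    have hfac : (x - r) * (x - s) = x*x - ((e:ℝ)-(d:ℝ))*x - ((k:ℝ)-(d:ℝ)) := by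
      have h9 : (x - r) * (x - s) = x*x - (r+s)*x + r*s := by ring
      rw [h9, hsum, hprod]; ring
    rw [hfac]
    exact hc
  have hks : (0:ℝ) < (k:ℝ) - s := by linarith
  have hrs : (0:ℝ) < r - s := by linarith
  set c : ℝ := (-2*s)/(((k:ℝ) - s)*(r - s)) with hc
  have habs : ∀ i, |adjEig G i| = adjEig G i + c * ((adjEig G i - k) * (adjEig G i - r)) := by
    intro i
    rcases mul_eq_zero.mp (hroot i) with h1 | h2
    · have hx : adjEig G i = k := by linarith [sub_eq_zero.mp h1]
      rw [hx, abs_of_nonneg (by linarith : (0:ℝ) ≤ (k:ℝ))]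
      ring
    · rcases mul_eq_zero.mp h2 with h3 | h4
      · have hx : adjEig G i = r := by linarith [sub_eq_zero.mp h3]
        rw [hx, abs_of_nonneg hr0]
        ring
      · have hx : adjEig G i = s := by linarith [sub_eq_zero.mp h4]
        rw [hx, abs_of_neg hs0, hc]
        field_simp
        ring
  have hsum3 : ∑ i, ((adjEig G i - k) * (adjEig G i - r)) = (n:ℝ)*k + (n:ℝ)*((k:ℝ)*r) := by
    have h9 : ∀ i, (adjEig G i - k) * (adjEig G i - r)
        = (adjEig G i)^2 - ((k:ℝ)+r)*(adjEig G i) + (k:ℝ)*r := fun i => by ring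
    rw [Finset.sum_congr rfl (fun i _ => h9 i), Finset.sum_add_distrib,
      Finset.sum_sub_distrib, hsumsq, ← Finset.mul_sum, hsum0, Finset.sum_const,
      Finset.card_univ, hcard, mul_zero, sub_zero, nsmul_eq_mul]
  have hEn : energy G = c * ((n:ℝ)*k + (n:ℝ)*((k:ℝ)*r)) := by
    show ∑ i, |adjEig G i| = _
    rw [Finset.sum_congr rfl (fun i _ => habs i), Finset.sum_add_distrib, hsum0,
      ← Finset.mul_sum, hsum3, zero_add]
  rw [hEn, hc]
  field_simp

lemma exists_adj_of_connected (G : SimpleGraph V) (hG : G.Connected)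
    (hn : 2 ≤ Fintype.card V) : ∃ u v : V, G.Adj u v := by
  obtain ⟨u, v, huv⟩ := Fintype.exists_pair_of_one_lt_card (α := V) (by omega)
  obtain ⟨w⟩ := hG.preconnected u v
  cases w with
  | nil => exact absurd rfl huv
  | cons h p => exact ⟨_, _, h⟩

lemma exists_common_nonadj (G : SimpleGraph V) :
    ∀ (L : ℕ) ⦃u v : V⦄ (w : G.Walk u v), w.length ≤ L → u ≠ v → ¬G.Adj u v →
    ∃ x y, x ≠ y ∧ ¬G.Adj x y ∧ (G.commonNeighbors x y).Nonempty := by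
  intro L
  induction L with
  | zero =>
    intro u v w hw hne _
    cases w with
    | nil => exact absurd rfl hne
    | cons h p => simp [SimpleGraph.Walk.length_cons] at hw
  | succ L ih =>
    intro u v w hw hne hna
    cases w with
    | nil => exact absurd rfl hne
    | cons h1 p =>
      rename_i a
      cases p with
      | nil => exact absurd h1 hna
      | cons h2 q =>
        rename_i b
        by_cases hub : u = b
        · subst hub
          exact ih q (by simp [SimpleGraph.Walk.length_cons] at hw ⊢; omega) hne hna
        · by_cases hadj : G.Adj u b
          · exact ih (SimpleGraph.Walk.cons hadj q)
              (by simp [SimpleGraph.Walk.length_cons] at hw ⊢; omega) hne hna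
          · refine ⟨u, b, hub, hadj, ⟨a, ?_⟩⟩
            rw [SimpleGraph.mem_commonNeighbors]
            exact ⟨h1, h2.symm⟩

lemma one_le_mu {G : SimpleGraph V} [DecidableRel G.Adj] {n k e d : ℕ}
    (h : G.IsSRGWith n k e d) (hG : G.Connected) (hGc : Gᶜ.Connected) (hn : 2 ≤ n) :
    1 ≤ d := by
  have hcard : 2 ≤ Fintype.card V := h.card ▸ hn
  obtain ⟨u, v, huv⟩ := exists_adj_of_connected Gᶜ hGc hcard
  rw [compl_adj] at huv
  obtain ⟨w⟩ := hG.preconnected u v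
  obtain ⟨x, y, hxy, hna, ⟨a, ha⟩⟩ :=
    exists_common_nonadj G w.length w le_rfl huv.1 huv.2
  have hc := h.of_not_adj hxy hna
  have : 0 < Fintype.card (G.commonNeighbors x y) :=
    Fintype.card_pos_iff.mpr ⟨⟨a, ha⟩⟩
  omega

lemma mu_le_k {G : SimpleGraph V} [DecidableRel G.Adj] {n k e d : ℕ}
    (h : G.IsSRGWith n k e d) (hGc : Gᶜ.Connected) (hn : 2 ≤ n) : d ≤ k := by
  have hcard : 2 ≤ Fintype.card V := h.card ▸ hn
  obtain ⟨u, v, huv⟩ := exists_adj_of_connected Gᶜ hGc hcard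
  rw [compl_adj] at huv
  have hc := h.of_not_adj huv.1 huv.2
  have := G.card_commonNeighbors_le_degree_left u v
  rw [hc, h.regular u] at this
  exact this

lemma mu_lt_k {G : SimpleGraph V} [DecidableRel G.Adj] {n k e d : ℕ}
    (h : G.IsSRGWith n k e d) (hG : G.Connected) (hGc : Gᶜ.Connected) (hn : 2 ≤ n) :
    d < k := by
  have hcard : 2 ≤ Fintype.card V := h.card ▸ hn
  rcases lt_or_eq_of_le (mu_le_k h hGc hn) with hlt | heq
  · exact hlt
  · exfalso
    have hNeq : ∀ x y : V, x ≠ y → ¬G.Adj x y →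
        G.neighborFinset x = G.neighborFinset y := by
      intro x y hxy hna
      have hcn := h.of_not_adj hxy hna
      have hsubx : (G.commonNeighbors x y).toFinset ⊆ G.neighborFinset x := by
        intro a ha
        rw [Set.mem_toFinset, SimpleGraph.mem_commonNeighbors] at ha
        rw [mem_neighborFinset]
        exact ha.1
      have hsuby : (G.commonNeighbors x y).toFinset ⊆ G.neighborFinset y := by
        intro a ha
        rw [Set.mem_toFinset, SimpleGraph.mem_commonNeighbors] at ha
        rw [mem_neighborFinset]
        exact ha.2
      have hcx : (G.commonNeighbors x y).toFinset.card = k := by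
        rw [Set.toFinset_card, hcn, heq]
      have hx : (G.commonNeighbors x y).toFinset = G.neighborFinset x :=
        Finset.eq_of_subset_of_card_le hsubx
          (by rw [hcx, card_neighborFinset_eq_degree, h.regular x])
      have hy : (G.commonNeighbors x y).toFinset = G.neighborFinset y :=
        Finset.eq_of_subset_of_card_le hsuby
          (by rw [hcx, card_neighborFinset_eq_degree, h.regular y])
      rw [← hx, hy]
    have hwalk : ∀ (x y : V), Gᶜ.Walk x y → G.neighborFinset x = G.neighborFinset y := by
      intro x y w
      induction w with
      | nil => rfl
      | cons ha p ih =>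
        rw [compl_adj] at ha
        exact (hNeq _ _ ha.1 ha.2).trans ih
    obtain ⟨u, v, huv⟩ := exists_adj_of_connected G hG hcard
    obtain ⟨w⟩ := hGc.preconnected u v
    have hN := hwalk u v w
    have : v ∈ G.neighborFinset v := by
      rw [← hN, mem_neighborFinset]; exact huv
    rw [mem_neighborFinset] at this
    exact G.irrefl this

lemma one_le_k {G : SimpleGraph V} [DecidableRel G.Adj] {n k e d : ℕ}
    (h : G.IsSRGWith n k e d) (hG : G.Connected) (hn : 2 ≤ n) : 1 ≤ k := by
  obtain ⟨u, v, huv⟩ := exists_adj_of_connected G hG (h.card ▸ hn)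
  have : 0 < G.degree u := by
    rw [← card_neighborFinset_eq_degree]
    exact card_pos.mpr ⟨v, (SimpleGraph.mem_neighborFinset G u v).mpr huv⟩
  rw [h.regular u] at this
  omega

lemma ell_lt_k {G : SimpleGraph V} [DecidableRel G.Adj] {n k e d : ℕ}
    (h : G.IsSRGWith n k e d) (hG : G.Connected) (hn : 2 ≤ n) : e + 1 ≤ k := by
  obtain ⟨u, v, huv⟩ := exists_adj_of_connected G hG (h.card ▸ hn)
  have h2 := huv.card_commonNeighbors_lt_degree
  rw [h.of_adj u v huv, h.regular u] at h2
  omega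

lemma k_lt_n {G : SimpleGraph V} [DecidableRel G.Adj] {n k e d : ℕ}
    (h : G.IsSRGWith n k e d) (hn : 2 ≤ n) : k + 1 ≤ n := by
  have : 0 < Fintype.card V := by rw [h.card]; omega
  obtain ⟨v⟩ := Fintype.card_pos_iff.mp this
  have := G.degree_lt_card_verts v
  rw [h.regular v, h.card] at this
  omega

lemma union_nonadj_bound {G : SimpleGraph V} [DecidableRel G.Adj] {n k e d : ℕ}
    (h : G.IsSRGWith n k e d) (hGc : Gᶜ.Connected) (hn : 2 ≤ n) : 2*k + 2 ≤ n + d := by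
  have hcard : 2 ≤ Fintype.card V := h.card ▸ hn
  obtain ⟨u, v, huv⟩ := exists_adj_of_connected Gᶜ hGc hcard
  rw [compl_adj] at huv
  have hc := h.card_neighborFinset_union_of_not_adj huv.1 huv.2
  have hsub : G.neighborFinset u ∪ G.neighborFinset v ⊆ Finset.univ \ {u, v} := by
    intro a ha
    simp only [mem_union, mem_neighborFinset] at ha
    simp only [mem_sdiff, mem_univ, true_and, mem_insert, mem_singleton]
    push_neg
    constructor
    · rintro rfl
      rcases ha with ha | ha
      · exact G.irrefl ha
      · exact huv.2 ha.symm
    · rintro rfl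
      rcases ha with ha | ha
      · exact huv.2 ha
      · exact G.irrefl ha
  have hle := Finset.card_le_card hsub
  rw [hc] at hle
  have hc2 : (Finset.univ \ ({u, v} : Finset V)).card = n - 2 := by
    rw [Finset.card_sdiff_of_subset (Finset.subset_univ _), Finset.card_univ, h.card]
    congr 1
    rw [Finset.card_insert_of_notMem (by simp [huv.1]), Finset.card_singleton]
  rw [hc2] at hle
  have hdk : d ≤ k := mu_le_k h hGc hn
  omega

lemma union_adj_bound {G : SimpleGraph V} [DecidableRel G.Adj] {n k e d : ℕ}
    (h : G.IsSRGWith n k e d) (hG : G.Connected) (hn : 2 ≤ n) : 2*k ≤ n + e := by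
  obtain ⟨u, v, huv⟩ := exists_adj_of_connected G hG (h.card ▸ hn)
  have hc := h.card_neighborFinset_union_of_adj huv
  have hle := Finset.card_le_univ (G.neighborFinset u ∪ G.neighborFinset v)
  rw [hc, h.card] at hle
  have hek : e + 1 ≤ k := ell_lt_k h hG hn
  omega

end Auxiliary

set_option maxHeartbeats 2000000 in
/-- Classification of the parameters of primitive strongly regular graphs
equienergetic with their complements: conference graphs, or the two parameter families
of Theorem 4.4 of the paper. -/
theorem srg_equienergetic_parameter_classification {V : Type*} [Fintype V] [DecidableEq V]
    (G : SimpleGraph V) [DecidableRel G.Adj] (n k e d : ℕ)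
    (h : G.IsSRGWith n k e d) (hn : 2 ≤ n) (hG : G.Connected) (hGc : Gᶜ.Connected) :
    energy G = energy Gᶜ ↔
      ((1 ≤ d ∧ n = 4 * d + 1 ∧ k = 2 * d ∧ e + 1 = d) ∨
       (∃ h' ℓ : ℤ, 1 ≤ ℓ ∧ ℓ ≠ h' ∧ ℓ ≠ -h' ∧ ℓ ≠ h' + 1 ∧ ℓ ≠ -(h' + 1) ∧
          (n : ℤ) = 4 * ℓ ^ 2 ∧ (k : ℤ) = (ℓ - h') * (2 * ℓ - 1) ∧
          (e : ℤ) = (d : ℤ) + 2 * h' ∧ (d : ℤ) = (ℓ - h') * (ℓ - h' - 1)) ∨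
       (∃ h' ℓ : ℤ, h' ≠ 0 ∧ 1 ≤ ℓ ∧ ℓ ≠ h' ∧ ℓ ≠ -h' ∧ ℓ ≠ -(h' + 1) ∧ ℓ ≠ h' - 1 ∧
          (n : ℤ) = (2 * ℓ + 1) ^ 2 ∧ (k : ℤ) = 2 * ℓ * (ℓ - h' + 1) ∧
          (e : ℤ) = (d : ℤ) + 2 * h' - 1 ∧ (d : ℤ) = (ℓ - h') * (ℓ - h' + 1))) := by
  -- combinatorial facts
  have hk1 : 1 ≤ k := one_le_k h hG hn
  have hd1 : 1 ≤ d := one_le_mu h hG hGc hn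
  have hdk : d < k := mu_lt_k h hG hGc hn
  have hek : e + 1 ≤ k := ell_lt_k h hG hn
  have hkn : k + 1 ≤ n := k_lt_n h hn
  have hnd : 2*k + 2 ≤ n + d := union_nonadj_bound h hGc hn
  have hne2 : 2*k ≤ n + e := union_adj_bound h hG hn
  -- complement facts
  have hGcc : Gᶜᶜ.Connected := by rw [compl_compl]; exact hG
  have hc := h.compl
  have hk1' : 1 ≤ n - k - 1 := one_le_k hc hGc hn
  have hdk' : n - (2*k - e) < n - k - 1 := mu_lt_k hc hGc hGcc hn
  -- real setup
  have hd_lt_kR : (d:ℝ) < k := by exact_mod_cast hdk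
  have hd_le_kR : (d:ℝ) + 1 ≤ k := by exact_mod_cast hdk
  obtain ⟨δ, hδ⟩ : ∃ x : ℝ, x = (e:ℝ) - d := ⟨_, rfl⟩
  obtain ⟨Δ, hΔ⟩ : ∃ x : ℝ, x = δ^2 + 4*((k:ℝ) - d) := ⟨_, rfl⟩
  obtain ⟨t, ht⟩ : ∃ x : ℝ, x = Real.sqrt Δ := ⟨_, rfl⟩
  have hΔ4 : 4 ≤ Δ := by rw [hΔ]; nlinarith [sq_nonneg δ]
  have ht2 : t^2 = Δ := by rw [ht]; exact Real.sq_sqrt (by linarith)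
  have ht0 : 0 < t := by rw [ht]; exact Real.sqrt_pos.mpr (by linarith)
  obtain ⟨r, hr⟩ : ∃ x : ℝ, x = (δ + t)/2 := ⟨_, rfl⟩
  obtain ⟨s, hs⟩ : ∃ x : ℝ, x = (δ - t)/2 := ⟨_, rfl⟩
  have hsum : r + s = (e:ℝ) - d := by rw [hr, hs, ← hδ]; ring
  have hprod : r * s = (d:ℝ) - k := by
    rw [hr, hs, show (δ+t)/2*((δ-t)/2) = (δ^2 - t^2)/4 from by ring, ht2, hΔ]; ring
  have hrs_t : r - s = t := by rw [hr, hs]; ring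
  have hs0 : s < 0 := by
    by_contra h0
    push_neg at h0
    have hrpos : 0 < r := by rw [hr]; rw [hs] at h0; linarith
    nlinarith
  have hr0 : 0 < r := by
    by_contra h0
    push_neg at h0
    nlinarith
  have hk1R : 1 ≤ (k:ℝ) := by exact_mod_cast hk1
  have hn2R : 2 ≤ (n:ℝ) := by exact_mod_cast hn
  have E1 := energy_master G h r s hsum hprod (le_of_lt hr0) hs0 hk1R
  -- complement cast identities
  have hcast1 : ((n - k - 1 : ℕ):ℝ) = (n:ℝ) - k - 1 := by
    have h9 : k + 1 ≤ n := hkn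
    rw [Nat.sub_sub, Nat.cast_sub h9]
    push_cast; ring
  have hcast2 : ((n - (2*k - d) - 2 : ℕ):ℝ) = (n:ℝ) - 2*k + d - 2 := by
    have hd2k : d ≤ 2*k := by omega
    have hx : 2*k - d + 2 ≤ n := by omega
    rw [Nat.sub_sub, Nat.cast_sub hx, Nat.cast_add, Nat.cast_sub hd2k]
    push_cast; ring
  have hcast3 : ((n - (2*k - e) : ℕ):ℝ) = (n:ℝ) - 2*k + e := by
    have he2k : e ≤ 2*k := by omega
    have hx : 2*k - e ≤ n := by omega
    rw [Nat.cast_sub hx, Nat.cast_sub he2k]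
    push_cast; ring
  obtain ⟨r', hr'⟩ : ∃ x : ℝ, x = -1 - s := ⟨_, rfl⟩
  obtain ⟨s', hs'⟩ : ∃ x : ℝ, x = -1 - r := ⟨_, rfl⟩
  have hsum' : r' + s' = ((n - (2*k - d) - 2 : ℕ):ℝ) - ((n - (2*k - e) : ℕ):ℝ) := by
    rw [hr', hs', hcast2, hcast3]
    linear_combination -hsum
  have hprod' : r' * s' = ((n - (2*k - e) : ℕ):ℝ) - ((n - k - 1 : ℕ):ℝ) := by
    rw [hr', hs', hcast3, hcast1]
    linear_combination hsum + hprod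
  have hs0' : s' < 0 := by rw [hs']; linarith
  have hdk'R : ((n - (2*k - e) : ℕ):ℝ) < ((n - k - 1 : ℕ):ℝ) := by exact_mod_cast hdk'
  have hr0' : 0 ≤ r' := by
    by_contra h0
    push_neg at h0
    nlinarith [mul_pos_of_neg_of_neg h0 hs0']
  have hk1R' : 1 ≤ ((n - k - 1 : ℕ):ℝ) := by exact_mod_cast hk1'
  have E2 := energy_master Gᶜ hc r' s' hsum' hprod' hr0' hs0' hk1R'
  rw [hcast1] at E2
  -- positivity of denominators
  have hD1 : 0 < ((k:ℝ) - s) * (r - s) := mul_pos (by linarith) (by linarith)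
  have hD2 : 0 < (((n:ℝ) - k - 1) - s') * (r' - s') := by
    have h9 : 1 ≤ (n:ℝ) - k - 1 := hcast1 ▸ hk1R'
    have h10 : r' - s' = r - s := by rw [hr', hs']; ring
    rw [h10]
    exact mul_pos (by rw [hs']; linarith) (by linarith)
  -- the key equivalence with the t-equation
  have hstar : energy G = energy Gᶜ ↔
      t * ((n:ℝ) - 1 - 2*k) = ((n:ℝ) - 1)*((e:ℝ) - d) + 2*k := by
    constructor
    · intro hEq
      have hX : (-2*s) * n * k * (1+r) * ((((n:ℝ) - k - 1) - s')*(r'-s'))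
          = (-2*s') * n * ((n:ℝ) - k - 1) * (1+r') * (((k:ℝ)-s)*(r-s)) := by
        rw [← E1, ← E2, hEq]; ring
      have hC : (0:ℝ) < (-2*s)*(n:ℝ)*(1+r)*(r-s) := by
        have c1 : (0:ℝ) < -2*s := by linarith
        have c2 : (0:ℝ) < (n:ℝ) := by linarith
        have c3 : (0:ℝ) < 1+r := by linarith
        have c4 : (0:ℝ) < r-s := by linarith
        positivity
      have hkey : (k:ℝ)*(r+1) = ((n:ℝ) - 1 - k)*(-s) := by
        rw [hr', hs'] at hX
        have hX' : ((-2*s)*(n:ℝ)*(1+r)*(r-s)) * ((k:ℝ)*((n:ℝ)-k+r))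
            = ((-2*s)*(n:ℝ)*(1+r)*(r-s)) * (((n:ℝ)-1-k)*((k:ℝ)-s)) := by
          linear_combination hX
        have h9 := mul_left_cancel₀ (ne_of_gt hC) hX'
        linear_combination h9
      rw [hr, hs] at hkey
      rw [← hδ]
      linear_combination -2*hkey
    · intro hT
      have hkey : (k:ℝ)*(r+1) = ((n:ℝ) - 1 - k)*(-s) := by
        rw [← hδ] at hT
        rw [hr, hs]
        linear_combination -hT/2
      have hE1' : energy G = ((-2*s) * n * k * (1+r)) / (((k:ℝ)-s)*(r-s)) := by
        rw [eq_div_iff (ne_of_gt hD1)]; exact E1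
      have hE2' : energy Gᶜ = ((-2*s') * n * ((n:ℝ) - k - 1) * (1+r'))
          / ((((n:ℝ) - k - 1) - s')*(r'-s')) := by
        rw [eq_div_iff (ne_of_gt hD2)]; exact E2
      rw [hE1', hE2', div_eq_div_iff (ne_of_gt hD1) (ne_of_gt hD2), hr', hs']
      linear_combination ((-2*s)*(n:ℝ)*(1+r)*(r-s)) * hkey
  rw [hstar]
  have hparamZ : (k:ℤ)*((k:ℤ) - e - 1) = ((n:ℤ) - k - 1)*d := by
    have hp := SimpleGraph.IsSRGWith.param_eq G h (by omega : 0 < n)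
    zify [show e ≤ k by omega, show 1 ≤ k - e by omega, show k ≤ n by omega,
      show 1 ≤ n - k by omega] at hp
    linarith [hp]
  constructor
  · intro hT
    obtain ⟨α, hα⟩ : ∃ a : ℤ, a = (n:ℤ) - 1 - 2*k := ⟨_, rfl⟩
    obtain ⟨β, hβ⟩ : ∃ b : ℤ, b = ((n:ℤ) - 1)*((e:ℤ) - d) + 2*k := ⟨_, rfl⟩
    have hTαβ : t * (α:ℝ) = (β:ℝ) := by rw [hα, hβ]; push_cast; linear_combination hT
    by_cases hα0 : α = 0
    · left
      have hβ0 : β = 0 := by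
        have h9 : (β:ℝ) = 0 := by rw [← hTαβ, hα0]; simp
        exact_mod_cast h9
      have hn2k : (n:ℤ) = 2*k + 1 := by omega
      have hed : (e:ℤ) + 1 = d := by
        have h9 : (2*(k:ℤ))*((e:ℤ) - d + 1) = 0 := by
          linear_combination -hβ + hβ0 - ((e:ℤ)-(d:ℤ))*hn2k
        rcases mul_eq_zero.mp h9 with h' | h'
        · exfalso; omega
        · omega
      have hk2d : (k:ℤ) = 2*d := by
        have h9 : (k:ℤ)*((k:ℤ) - 2*d) = 0 := by
          linear_combination hparamZ + (k:ℤ)*hed + (d:ℤ)*hn2k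
        rcases mul_eq_zero.mp h9 with h' | h'
        · exfalso; omega
        · omega
      exact ⟨hd1, by omega, by omega, by omega⟩
    · have hΔZ : ((((e:ℤ)-(d:ℤ))^2 + 4*((k:ℤ)-(d:ℤ)) : ℤ) : ℝ) = Δ := by
        rw [hΔ, hδ]; push_cast; ring
      have hβ2 : β^2 = (((e:ℤ)-d)^2 + 4*((k:ℤ)-d)) * α^2 := by
        have h9 : (β:ℝ)^2 = ((((e:ℤ)-d)^2 + 4*((k:ℤ)-d) : ℤ):ℝ) * (α:ℝ)^2 := by
          rw [hΔZ, ← hTαβ, mul_pow, ht2]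
        exact_mod_cast h9
      have hdvd : α ∣ β := by
        refine (Int.pow_dvd_pow_iff (two_ne_zero)).mp ⟨(((e:ℤ)-d)^2 + 4*((k:ℤ)-d)), ?_⟩
        linear_combination hβ2
      obtain ⟨T, hTdef⟩ := hdvd
      have hαR : ((α:ℤ):ℝ) ≠ 0 := Int.cast_ne_zero.mpr hα0
      have hTt : (T:ℝ) = t := by
        have h9 : (T:ℝ) * (α:ℝ) = t * (α:ℝ) := by
          rw [hTαβ, hTdef]; push_cast; ring
        exact mul_right_cancel₀ hαR h9
      have hT2 : T^2 = ((e:ℤ)-d)^2 + 4*((k:ℤ)-d) := by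
        have h9 : α^2 * T^2 = α^2 * (((e:ℤ)-d)^2 + 4*((k:ℤ)-d)) := by
          linear_combination hβ2 - (β + α*T)*hTdef
        exact mul_left_cancel₀ (pow_ne_zero 2 hα0) h9
      have hT0 : 0 < T := by
        have h9 : (0:ℝ) < (T:ℝ) := by rw [hTt]; exact ht0
        exact_mod_cast h9
      have hpar : Even (T - ((e:ℤ) - d)) := by
        by_contra hodd
        rw [Int.not_even_iff_odd] at hodd
        have h9 : Even ((T - ((e:ℤ)-d))*(T + ((e:ℤ)-d))) :=
          ⟨2*((k:ℤ)-d), by linear_combination hT2⟩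
        have h10 : Odd (T + ((e:ℤ)-d)) := by
          have h11 : T + ((e:ℤ)-d) = (T - ((e:ℤ)-d)) + 2*((e:ℤ)-d) := by ring
          rw [h11]
          exact hodd.add_even ⟨(e:ℤ)-d, by ring⟩
        exact (Int.not_even_iff_odd.mpr (hodd.mul h10)) h9
      obtain ⟨M, hM⟩ : ∃ M : ℤ, T - ((e:ℤ) - d) = 2*M := by
        obtain ⟨m0, hm0⟩ := hpar; exact ⟨m0, by omega⟩
      obtain ⟨R, hR⟩ : ∃ R : ℤ, R = T - M := ⟨_, rfl⟩
      have hδZ : (e:ℤ) - d = R - M := by omega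
      have hT_RM : T = R + M := by omega
      have hMR : (M:ℝ) = -s := by
        have h9 : (T:ℝ) - ((e:ℝ) - d) = 2*(M:ℝ) := by exact_mod_cast hM
        rw [hTt, ← hδ] at h9
        rw [hs]; linarith
      have hRR : (R:ℝ) = r := by
        have h9 : (R:ℝ) = (T:ℝ) - M := by exact_mod_cast hR
        rw [hTt, hMR] at h9
        rw [h9, hr, hs]; ring
      have hkeyR : (k:ℝ)*(r+1) = ((n:ℝ) - 1 - k)*(-s) := by
        rw [← hδ] at hT
        rw [hr, hs]
        linear_combination -hT/2
      have hkeyZ : (k:ℤ)*(R+1) = ((n:ℤ) - 1 - k)*M := by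
        have h9 : (k:ℝ)*((R:ℝ)+1) = ((n:ℝ) - 1 - k)*(M:ℝ) := by
          rw [hRR, hMR]; exact hkeyR
        exact_mod_cast h9
      have hM1 : 1 ≤ M := by
        have h9 : (1:ℝ) ≤ (M:ℝ) := by
          rw [hr'] at hr0'
          rw [hMR]; linarith
        exact_mod_cast h9
      have hR1 : 1 ≤ R := by
        have h9 : (0:ℝ) < (R:ℝ) := by rw [hRR]; exact hr0
        have h10 : (0:ℤ) < R := by exact_mod_cast h9
        omega
      have hRM : R*M = (k:ℤ) - d := by
        have h9 : T^2 = (R-M)^2 + 4*((k:ℤ)-d) := by rw [← hδZ]; exact hT2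
        have h10 : 4*(R*M) = 4*((k:ℤ)-d) := by
          rw [hT_RM] at h9
          linear_combination h9
        linarith
      have he1 : (k:ℤ) - e - 1 = (R+1)*(M-1) := by linear_combination -hRM - hδZ
      have h0 : (k:ℤ)*(R+1)*(M*(M-1) - d) = 0 := by
        have hparam2 : (k:ℤ)*((R+1)*(M-1)) = ((n:ℤ) - k - 1)*d := by
          rw [← he1]; exact hparamZ
        linear_combination M*hparam2 - d*hkeyZ
      have hdM : (d:ℤ) = M*(M-1) := by
        rcases mul_eq_zero.mp h0 with h' | h'
        · rcases mul_eq_zero.mp h' with h'' | h''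
          · exfalso; omega
          · exfalso; omega
        · linarith
      have hM2 : 2 ≤ M := by
        rcases eq_or_lt_of_le hM1 with h' | h'
        · exfalso
          rw [← h'] at hdM
          norm_num at hdM
          omega
        · omega
      have hkM : (k:ℤ) = M*(R + M - 1) := by linear_combination -hRM + hdM
      have hnT : (n:ℤ) = (R+M)^2 := by
        have h9 : M*((n:ℤ) - (R+M)^2) = 0 := by
          linear_combination -hkeyZ + (R+M+1)*hkM
        rcases mul_eq_zero.mp h9 with h' | h'
        · exfalso; omega
        · linarith
      rcases Int.even_or_odd (R + M) with hpar2 | hpar2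
      · obtain ⟨ℓ, hL⟩ := hpar2
        right; left
        refine ⟨ℓ - M, ℓ, by omega, by omega, by omega, by omega, by omega, ?_, ?_, ?_, ?_⟩
        · linear_combination hnT + (R+M+2*ℓ)*hL
        · linear_combination hkM + M*hL
        · linear_combination hδZ + hL
        · linear_combination hdM
      · obtain ⟨ℓ, hL⟩ := hpar2
        right; right
        refine ⟨ℓ - M + 1, ℓ, ?_, by omega, by omega, by omega, by omega, by omega,
          ?_, ?_, ?_, ?_⟩
        · intro h9
          apply hα0
          rw [hα]
          have hMl : M = ℓ + 1 := by omega
          linear_combination hnT - 2*hkM + (R+M-1)*hL - 2*(R+M-1)*hMl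
        · linear_combination hnT + (R+M+2*ℓ+1)*hL
        · linear_combination hkM + M*hL
        · linear_combination hδZ + hL
        · linear_combination hdM
  · intro hF
    rcases hF with ⟨hd1', hn', hk', he'⟩ |
      ⟨h', ℓ, hl1, _, _, _, _, hnZ, hkZ, heZ, hdZ⟩ |
      ⟨h', ℓ, _, hl1, _, _, _, _, hnZ, hkZ, heZ, hdZ⟩
    · have hnr : (n:ℝ) = 4*(d:ℝ) + 1 := by exact_mod_cast hn'
      have hkr : (k:ℝ) = 2*(d:ℝ) := by exact_mod_cast hk'
      have her : (e:ℝ) + 1 = (d:ℝ) := by exact_mod_cast he'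
      rw [hnr, hkr, show (e:ℝ) = (d:ℝ) - 1 from by linarith]
      ring
    · have hnr : (n:ℝ) = 4*(ℓ:ℝ)^2 := by exact_mod_cast hnZ
      have hkr : (k:ℝ) = ((ℓ:ℝ) - (h':ℝ))*(2*(ℓ:ℝ) - 1) := by exact_mod_cast hkZ
      have her : (e:ℝ) = (d:ℝ) + 2*(h':ℝ) := by exact_mod_cast heZ
      have hdr : (d:ℝ) = ((ℓ:ℝ) - (h':ℝ))*((ℓ:ℝ) - (h':ℝ) - 1) := by exact_mod_cast hdZ
      have hl1R : (1:ℝ) ≤ (ℓ:ℝ) := by exact_mod_cast hl1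
      have hΔv : Δ = (2*(ℓ:ℝ))^2 := by rw [hΔ, hδ, her, hkr, hdr]; ring
      have htv : t = 2*(ℓ:ℝ) := by rw [ht, hΔv, Real.sqrt_sq (by linarith)]
      rw [htv, hnr, hkr, her]
      ring
    · have hnr : (n:ℝ) = (2*(ℓ:ℝ) + 1)^2 := by exact_mod_cast hnZ
      have hkr : (k:ℝ) = 2*(ℓ:ℝ)*((ℓ:ℝ) - (h':ℝ) + 1) := by exact_mod_cast hkZ
      have her : (e:ℝ) = (d:ℝ) + 2*(h':ℝ) - 1 := by exact_mod_cast heZ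
      have hdr : (d:ℝ) = ((ℓ:ℝ) - (h':ℝ))*((ℓ:ℝ) - (h':ℝ) + 1) := by exact_mod_cast hdZ
      have hl1R : (1:ℝ) ≤ (ℓ:ℝ) := by exact_mod_cast hl1
      have hΔv : Δ = (2*(ℓ:ℝ) + 1)^2 := by rw [hΔ, hδ, her, hkr, hdr]; ring
      have htv : t = 2*(ℓ:ℝ) + 1 := by rw [ht, hΔv, Real.sqrt_sq (by linarith)]
      rw [htv, hnr, hkr, her]
      ring
end

section
/- Let d : ℕ with 1 ≤ d and let G be a simple graph on a finite vertex type with G.IsSRGWith (4*d+1) (2*d) (d-1) d (a conference graph). Then E(G) = 2*d*(1 + Real.sqrt (4*d+1)). -/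
open Finset

section Aux

open Matrix

variable {V : Type*} [Fintype V] [DecidableEq V]

/-- Key identity for a conference graph: `A² + A - d·1 = d·J`. -/
lemma conf_matrix_id (G : SimpleGraph V) [DecidableRel G.Adj] (d : ℕ) (hd : 1 ≤ d)
    (h : G.IsSRGWith (4 * d + 1) (2 * d) (d - 1) d) :
    G.adjMatrix ℝ * G.adjMatrix ℝ + G.adjMatrix ℝ - (d : ℝ) • (1 : Matrix V V ℝ)
      = (d : ℝ) • (Matrix.of fun _ _ => (1 : ℝ)) := by
  have hC : Gᶜ.adjMatrix ℝ
      = (Matrix.of fun _ _ => (1 : ℝ)) - 1 - G.adjMatrix ℝ := by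
    ext i j
    by_cases hij : i = j <;> by_cases hadj : G.Adj i j <;>
      simp [hij, hadj, Matrix.one_apply, SimpleGraph.compl_adj] <;>
      simp [Ne.symm, hij]
  have hm : G.adjMatrix ℝ * G.adjMatrix ℝ
      = (2 * (d:ℝ)) • 1 + ((d:ℝ) - 1) • G.adjMatrix ℝ + (d:ℝ) • Gᶜ.adjMatrix ℝ := by
    have hm0 := h.matrix_eq (α := ℝ)
    rw [pow_two] at hm0
    rw [hm0, ← Nat.cast_smul_eq_nsmul ℝ (2*d), ← Nat.cast_smul_eq_nsmul ℝ (d-1),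
      ← Nat.cast_smul_eq_nsmul ℝ d, Nat.cast_sub hd]
    push_cast
    ring_nf
  rw [hm, hC]
  module

lemma conf_AJ (G : SimpleGraph V) [DecidableRel G.Adj] (d : ℕ)
    (hreg : G.IsRegularOfDegree (2 * d)) :
    G.adjMatrix ℝ * (Matrix.of fun _ _ => (1 : ℝ))
      = (2 * (d:ℝ)) • (Matrix.of fun _ _ => (1 : ℝ)) := by
  ext i j
  simp [Matrix.mul_apply, SimpleGraph.adjMatrix_apply, Finset.sum_boole]
  have h2 : (Finset.univ.filter fun x => G.Adj i x) = G.neighborFinset i := by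
    ext; simp
  rw [h2]
  simp [hreg i]

lemma trace_eig_eq {A : Matrix V V ℝ} (hA : A.IsHermitian) :
    A.trace = ∑ i, hA.eigenvalues i := by
  let U := (Matrix.IsHermitian.eigenvectorUnitary hA : Matrix V V ℝ)
  have hU : star U * U = 1 :=
    Matrix.mem_unitaryGroup_iff'.mp (Matrix.IsHermitian.eigenvectorUnitary hA).2
  set D : Matrix V V ℝ := Matrix.diagonal (RCLike.ofReal ∘ hA.eigenvalues) with hD
  calc A.trace = (U * D * star U).trace := by rw [hA.spectral_theorem, Unitary.conjStarAlgAut_apply]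
    _ = (star U * (U * D)).trace := by rw [Matrix.trace_mul_comm]
    _ = D.trace := by rw [← Matrix.mul_assoc, hU, Matrix.one_mul]
    _ = ∑ i, hA.eigenvalues i := by simp [hD, Matrix.trace_diagonal]

lemma trace_sq_eq {A : Matrix V V ℝ} (hA : A.IsHermitian) :
    (A * A).trace = ∑ i, hA.eigenvalues i ^ 2 := by
  let U := (Matrix.IsHermitian.eigenvectorUnitary hA : Matrix V V ℝ)
  have hU : star U * U = 1 :=
    Matrix.mem_unitaryGroup_iff'.mp (Matrix.IsHermitian.eigenvectorUnitary hA).2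
  have hspec := hA.spectral_theorem
  set D : Matrix V V ℝ := Matrix.diagonal (RCLike.ofReal ∘ hA.eigenvalues) with hD
  calc (A * A).trace = (U * D * star U * (U * D * star U)).trace := by rw [hspec, Unitary.conjStarAlgAut_apply]
    _ = (U * (D * D) * star U).trace := by
        rw [show U * D * star U * (U * D * star U) = U * D * (star U * U) * D * star U by
          noncomm_ring]
        rw [hU]
        noncomm_ring
    _ = (star U * (U * (D * D))).trace := by rw [Matrix.trace_mul_comm]
    _ = (D * D).trace := by rw [← Matrix.mul_assoc, hU, Matrix.one_mul]
    _ = ∑ i, hA.eigenvalues i ^ 2 := by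
        simp [hD, Matrix.diagonal_mul_diagonal, Matrix.trace_diagonal, pow_two]

lemma eig_cubic_s9 {A : Matrix V V ℝ} (hA : A.IsHermitian) (c1 c2 : ℝ)
    (hzero : (A - c1 • 1) * (A * A + A - c2 • 1) = 0) (i : V) :
    (hA.eigenvalues i - c1) * (hA.eigenvalues i ^ 2 + hA.eigenvalues i - c2) = 0 := by
  set μ := hA.eigenvalues i with hμ
  set v : V → ℝ := ⇑(hA.eigenvectorBasis i) with hv
  have hmv : A *ᵥ v = μ • v := hA.mulVec_eigenvectorBasis i
  have hv0 : v ≠ 0 := by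
    intro h0
    have hn : ‖hA.eigenvectorBasis i‖ = 1 := (hA.eigenvectorBasis).orthonormal.1 i
    rw [show hA.eigenvectorBasis i = 0 from by ext x; exact congrFun h0 x] at hn
    simp at hn
  have h2 : (A * A + A - c2 • (1 : Matrix V V ℝ)) *ᵥ v = (μ ^ 2 + μ - c2) • v := by
    rw [Matrix.sub_mulVec, Matrix.add_mulVec, ← Matrix.mulVec_mulVec, hmv, Matrix.mulVec_smul,
      hmv, Matrix.smul_mulVec, Matrix.one_mulVec]
    module
  have hmul : ((A - c1 • 1) * (A * A + A - c2 • 1)) *ᵥ v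
      = ((μ - c1) * (μ ^ 2 + μ - c2)) • v := by
    rw [← Matrix.mulVec_mulVec, h2, Matrix.mulVec_smul, Matrix.sub_mulVec, hmv,
      Matrix.smul_mulVec, Matrix.one_mulVec]
    module
  rw [hzero, Matrix.zero_mulVec] at hmul
  by_contra hne
  exact hv0 (by simpa [hne, smul_eq_zero] using hmul.symm)

end Aux

/-- A conference graph `srg(4d+1, 2d, d-1, d)` has energy
`2d(1 + √(4d+1))`. -/
theorem conference_graph_energy {V : Type*} [Fintype V] [DecidableEq V]
    (G : SimpleGraph V) [DecidableRel G.Adj] (d : ℕ) (hd : 1 ≤ d)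
    (h : G.IsSRGWith (4 * d + 1) (2 * d) (d - 1) d) :
    energy G = 2 * (d : ℝ) * (1 + Real.sqrt (4 * (d : ℝ) + 1)) := by
  have hA := adjMatrix_isHermitian G
  set A := G.adjMatrix ℝ with hAdef
  set μ : V → ℝ := hA.eigenvalues with hμdef
  have hEig : adjEig G = μ := by unfold adjEig; congr!
  have hd' : (1 : ℝ) ≤ (d : ℝ) := by exact_mod_cast hd
  -- the square root
  set c : ℝ := Real.sqrt (4 * (d : ℝ) + 1) with hcdef
  have hc2 : c ^ 2 = 4 * (d : ℝ) + 1 := Real.sq_sqrt (by positivity)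
  have hc0 : 0 ≤ c := Real.sqrt_nonneg _
  have hc1 : 1 ≤ c := by nlinarith
  set r : ℝ := (-1 + c) / 2 with hrdef
  set s : ℝ := (-1 - c) / 2 with hsdef
  -- the cubic relation
  have hJ := conf_matrix_id G d hd h
  have hAJ := conf_AJ G d h.regular
  have hzero : (A - (2 * (d:ℝ)) • 1) * (A * A + A - (d:ℝ) • 1) = 0 := by
    rw [hJ, Matrix.mul_smul, Matrix.sub_mul, hAJ, Matrix.smul_mul, Matrix.one_mul]
    module
  have hclass : ∀ i, μ i = 2 * (d:ℝ) ∨ μ i = r ∨ μ i = s := by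
    intro i
    have hcu := eig_cubic_s9 hA (2 * (d:ℝ)) (d:ℝ) hzero i
    rcases mul_eq_zero.mp hcu with h1 | h1
    · left; linarith
    · have hrs1 : r + s + 1 = 0 := by rw [hrdef, hsdef]; ring
      have hrs2 : r * s + (d:ℝ) = 0 := by
        rw [hrdef, hsdef]; linear_combination (-1/4 : ℝ) * hc2
      have h2 : (μ i - r) * (μ i - s) = 0 := by
        linear_combination h1 - μ i * hrs1 + hrs2
      rcases mul_eq_zero.mp h2 with h3 | h3
      · right; left; linarith
      · right; right; linarith
  -- distinctness
  have hrlt : r < 2 * (d:ℝ) := by rw [hrdef]; nlinarith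
  have hslt : s < 0 := by rw [hsdef]; nlinarith
  have hrge : 0 ≤ r := by rw [hrdef]; linarith
  have hrs_ne : r ≠ s := by rw [hrdef, hsdef]; intro hh; nlinarith
  have h2dr : (2 * (d:ℝ)) ≠ r := by linarith
  have h2ds : (2 * (d:ℝ)) ≠ s := by nlinarith
  -- the multiplicities
  set t : ℝ := ((Finset.univ.filter fun i => μ i = 2 * (d:ℝ)).card : ℝ) with htdef
  set a : ℝ := ((Finset.univ.filter fun i => μ i = r).card : ℝ) with hadef
  set b : ℝ := ((Finset.univ.filter fun i => μ i = s).card : ℝ) with hbdef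
  have hsum : ∀ F : ℝ → ℝ, ∑ i, F (μ i) = F (2 * (d:ℝ)) * t + F r * a + F s * b := by
    intro F
    have step : ∀ i, F (μ i) = (if μ i = 2 * (d:ℝ) then F (2 * (d:ℝ)) else 0)
        + (if μ i = r then F r else 0) + (if μ i = s then F s else 0) := by
      intro i
      rcases hclass i with h' | h' | h' <;> rw [h'] <;>
        simp [h2dr, h2ds, hrs_ne, Ne.symm h2dr, Ne.symm h2ds, Ne.symm hrs_ne]
    rw [Finset.sum_congr rfl (fun i _ => step i), Finset.sum_add_distrib,
      Finset.sum_add_distrib]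
    have aux : ∀ (x y : ℝ), (∑ i, if μ i = x then y else 0)
        = y * ((Finset.univ.filter fun i => μ i = x).card : ℝ) := by
      intro x y
      rw [← Finset.sum_filter, Finset.sum_const, nsmul_eq_mul]
      ring
    rw [aux, aux, aux]
  -- card V
  have hcardV : ((Fintype.card V : ℝ)) = 4 * (d:ℝ) + 1 := by
    rw [h.card]; push_cast; ring
  -- equation 1
  have e1 : t + a + b = 4 * (d:ℝ) + 1 := by
    have h1 := hsum (fun _ => (1:ℝ))
    simp only [Finset.sum_const, Finset.card_univ, nsmul_eq_mul, mul_one, one_mul] at h1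
    rw [hcardV] at h1
    linarith
  -- equation 2 : trace
  have e2 : 2 * (d:ℝ) * t + r * a + s * b = 0 := by
    have h1 := hsum (fun x => x)
    have h2 : ∑ i, μ i = 0 := by
      rw [← trace_eig_eq hA, hAdef, SimpleGraph.trace_adjMatrix]
    rw [h2] at h1
    linarith
  -- equation 3 : trace of square
  have e3 : (2 * (d:ℝ)) ^ 2 * t + r ^ 2 * a + s ^ 2 * b = 2 * (d:ℝ) * (4 * (d:ℝ) + 1) := by
    have h1 := hsum (fun x => x ^ 2)
    have h2 : (A * A).trace = 2 * (d:ℝ) * (4 * (d:ℝ) + 1) := by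
      have hAA : A * A = (d:ℝ) • (Matrix.of fun _ _ => (1:ℝ)) - A + (d:ℝ) • 1 := by
        rw [← hJ]; module
      have hA0 : A.trace = 0 := by rw [hAdef]; exact G.trace_adjMatrix ℝ
      rw [hAA]
      simp only [Matrix.trace_add, Matrix.trace_sub, Matrix.trace_smul, Matrix.trace_one, hA0]
      have hJtr : (Matrix.of fun (_ _ : V) => (1:ℝ)).trace = (Fintype.card V : ℝ) := by
        simp [Matrix.trace, Matrix.diag]
      rw [hJtr]
      simp only [smul_eq_mul, hcardV]
      ring
    rw [trace_sq_eq hA] at h2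
    rw [h2] at h1
    linarith
  have hr2 : r ^ 2 = (d:ℝ) - r := by
    rw [hrdef]; linear_combination (1/4 : ℝ) * hc2
  have hs2 : s ^ 2 = (d:ℝ) - s := by
    rw [hsdef]; linear_combination (1/4 : ℝ) * hc2
  -- solve for the multiplicities
  have key : t * (4 * (d:ℝ) ^ 2 + d) = 4 * (d:ℝ) ^ 2 + d := by
    linear_combination e3 - a * hr2 - b * hs2 + e2 - (d:ℝ) * e1
  have ht : t = 1 := by
    have hpos : (0:ℝ) < 4 * (d:ℝ) ^ 2 + d := by nlinarith
    have := mul_right_cancel₀ (ne_of_gt hpos) (key.trans (one_mul _).symm)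
    linarith [this]
  have e2' : 2 * (d:ℝ) + r * a + s * b = 0 := by rw [ht] at e2; linarith
  have e1' : 1 + a + b = 4 * (d:ℝ) + 1 := by rw [ht] at e1; linarith
  have hac : c * a = c * (2 * (d:ℝ)) := by
    linear_combination e2' - s * e1'
  have ha : a = 2 * (d:ℝ) := mul_left_cancel₀ (by linarith : c ≠ 0) hac
  have hb : b = 2 * (d:ℝ) := by linarith
  -- conclude
  have henergy : energy G = ∑ i, |μ i| := by
    unfold energy; rw [hEig]
  rw [henergy, hsum (fun x => |x|)]
  rw [ht, ha, hb]
  rw [abs_of_nonneg (by positivity : (0:ℝ) ≤ 2 * (d:ℝ)), abs_of_nonneg hrge,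
    abs_of_nonpos (le_of_lt hslt)]
  rw [hrdef, hsdef]
  ring
end
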